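/- arXiv:1010.4123 — 5 statements merged into one kernel-verified Lean document; each statement's English description precedes it below -/
import Mathlib

section
/- Let $F$ be the CDF of the chi-squared distribution with 1 degree of freedom and $G(v)=1-e^{-v}$ the standard exponential CDF, and set $\tilde H=F^{-1}\circ G$ on $(0,\infty)$. Then the derivative $\tilde H'$ is positive, increasing, concave on $(0,\infty)$, and $\tilde H'(v)\to 2$ as $v\to\infty$. -/
open Filter Real Set

/-- The CDF of the chi-squared distribution with one degree of freedom. -/
noncomputable def chi1CDF (y : ℝ) : ℝ :=
  ∫ t in (0:ℝ)..y, t ^ (-(1:ℝ)/2) * Real.exp (-t/2) / Real.sqrt (2 * π)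

namespace ChiAux

open MeasureTheory Topology

/-! ### The density and basic weight function -/

noncomputable def w (x : ℝ) : ℝ := x ^ (-(1:ℝ)/2) * Real.exp (-x/2)

noncomputable def pdf1 (x : ℝ) : ℝ := x ^ (-(1:ℝ)/2) * Real.exp (-x/2) / Real.sqrt (2 * π)

lemma pdf1_eq (x : ℝ) : pdf1 x = w x / Real.sqrt (2 * π) := rfl

lemma sqrt_two_pi_pos : 0 < Real.sqrt (2 * π) := Real.sqrt_pos.2 (by positivity)

lemma w_pos {x : ℝ} (hx : 0 < x) : 0 < w x := by unfold w; positivity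

lemma pdf1_pos {x : ℝ} (hx : 0 < x) : 0 < pdf1 x := by
  rw [pdf1_eq]; exact div_pos (w_pos hx) sqrt_two_pi_pos

lemma hasDerivAt_w {x : ℝ} (hx : 0 < x) :
    HasDerivAt w (-((x+1)/(2*x)) * w x) x := by
  have h1 : HasDerivAt (fun y : ℝ => y ^ (-(1:ℝ)/2)) ((-(1:ℝ)/2) * x ^ (-(1:ℝ)/2 - 1)) x :=
    Real.hasDerivAt_rpow_const (Or.inl hx.ne')
  have h2 : HasDerivAt (fun y : ℝ => Real.exp (-y/2)) (Real.exp (-x/2) * (-1/2)) x := by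
    have := (Real.hasDerivAt_exp (-x/2)).comp x ((hasDerivAt_id x).neg.div_const 2)
    exact this.congr_deriv (by ring)
  have := h1.mul h2
  refine this.congr_deriv (Eq.symm ?_)
  have hx' : x ≠ 0 := hx.ne'
  have hrw : x ^ (-(1:ℝ)/2 - 1) = x ^ (-(1:ℝ)/2) / x := by
    rw [Real.rpow_sub hx, Real.rpow_one]
  rw [hrw]
  unfold w
  field_simp
  ring

lemma continuousAt_w {x : ℝ} (hx : 0 < x) : ContinuousAt w x := (hasDerivAt_w hx).continuousAt

lemma hasDerivAt_pdf1 {x : ℝ} (hx : 0 < x) :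
    HasDerivAt pdf1 (-((x+1)/(2*x)) * pdf1 x) x := by
  have := (hasDerivAt_w hx).div_const (Real.sqrt (2 * π))
  refine this.congr_deriv (Eq.symm ?_)
  rw [pdf1_eq]; ring

lemma continuousAt_pdf1 {x : ℝ} (hx : 0 < x) : ContinuousAt pdf1 x :=
  (hasDerivAt_pdf1 hx).continuousAt

/-! ### Integrability and total mass -/

lemma w_eq_zero {x : ℝ} (hx : x ≤ 0) : w x = 0 := by
  unfold w
  rcases lt_or_eq_of_le hx with h | h
  · rw [Real.rpow_def_of_neg h, show (-(1:ℝ)/2) * π = -(π/2) by ring, Real.cos_neg,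
      Real.cos_pi_div_two]
    ring
  · subst h; rw [Real.zero_rpow (by norm_num)]; ring

lemma w_cong : ∀ x ∈ Ioi (0:ℝ),
    (fun x : ℝ => x ^ (-(1:ℝ)/2) * rexp (-(1/2) * x ^ (1:ℝ))) x = w x := by
  intro x _
  simp only [Real.rpow_one, w]
  ring_nf

lemma integrableOn_w : IntegrableOn w (Ioi (0:ℝ)) := by
  have h := integrableOn_rpow_mul_exp_neg_mul_rpow (p := 1) (s := -(1:ℝ)/2) (b := 1/2)
    (by norm_num) (by norm_num) (by norm_num)
  exact h.congr_fun w_cong measurableSet_Ioi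

lemma integral_w : ∫ x in Ioi (0:ℝ), w x = Real.sqrt (2*π) := by
  have h := integral_rpow_mul_exp_neg_mul_rpow (p := 1) (q := -(1:ℝ)/2) (b := 1/2)
    (by norm_num) (by norm_num) (by norm_num)
  rw [← setIntegral_congr_fun measurableSet_Ioi w_cong, h,
    show (-(-(1:ℝ)/2 + 1) / 1) = (-((1:ℝ)/2)) by norm_num,
    show ((-(1:ℝ)/2 + 1) / 1) = (1:ℝ)/2 by norm_num, Real.Gamma_one_half_eq,
    Real.rpow_neg (by norm_num), ← Real.inv_rpow (by norm_num),
    show ((1:ℝ)/2)⁻¹ = (2:ℝ) by norm_num, ← Real.sqrt_eq_rpow,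
    show √2 * ((1:ℝ)/1) * √π = √2 * √π by ring, ← Real.sqrt_mul (by norm_num)]

lemma chi1CDF_eq (y : ℝ) : chi1CDF y = ∫ t in (0:ℝ)..y, pdf1 t := rfl

lemma integrableOn_pdf1 : IntegrableOn pdf1 (Ioi (0:ℝ)) := by
  exact IntegrableOn.congr_fun (integrableOn_w.mul_const (Real.sqrt (2*π))⁻¹)
    (fun x _ => show w x * (Real.sqrt (2*π))⁻¹ = pdf1 x by rw [pdf1_eq, div_eq_mul_inv]) measurableSet_Ioi

lemma integral_pdf1 : ∫ t in Ioi (0:ℝ), pdf1 t = 1 := by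
  rw [show pdf1 = fun t => w t / Real.sqrt (2*π) from rfl]
  rw [integral_div, integral_w, div_self sqrt_two_pi_pos.ne']

lemma integrableOn_pdf1_Ioi (x : ℝ) : IntegrableOn pdf1 (Ioi x) := by
  rcases le_or_gt 0 x with h | h
  · exact integrableOn_pdf1.mono_set (Ioi_subset_Ioi h)
  · rw [← Ioc_union_Ioi_eq_Ioi h.le, integrableOn_union]
    constructor
    · refine integrableOn_zero.congr_fun (fun t ht => ?_) measurableSet_Ioc
      rw [pdf1_eq, w_eq_zero ht.2, zero_div]
    · exact integrableOn_pdf1.mono_set (le_refl _)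

lemma intervalIntegrable_pdf1 (a b : ℝ) : IntervalIntegrable pdf1 volume a b := by
  have h : IntegrableOn pdf1 (Ioi (-1 - |a| - |b|)) := integrableOn_pdf1_Ioi _
  refine (h.mono_set fun t ht => ?_).intervalIntegrable
  have h1 : -1 - |a| - |b| < a ⊓ b := by
    refine lt_inf_iff.2 ⟨?_, ?_⟩ <;>
      nlinarith [abs_nonneg a, abs_nonneg b, neg_abs_le a, neg_abs_le b]
  exact lt_of_lt_of_le h1 ht.1

lemma chi1CDF_plus_tail {x : ℝ} (hx : 0 ≤ x) :
    chi1CDF x + ∫ t in Ioi x, pdf1 t = 1 := by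
  have hsplit : ∫ t in Ioi (0:ℝ), pdf1 t = (∫ t in Ioc 0 x, pdf1 t) + ∫ t in Ioi x, pdf1 t := by
    rw [← setIntegral_union (Ioc_disjoint_Ioi le_rfl) measurableSet_Ioi
      (integrableOn_pdf1.mono_set Ioc_subset_Ioi_self) (integrableOn_pdf1_Ioi x),
      Ioc_union_Ioi_eq_Ioi hx]
  rw [chi1CDF_eq, intervalIntegral.integral_of_le hx, ← hsplit, integral_pdf1]

/-! ### The survival function and hazard reciprocal -/

noncomputable def Gc (x : ℝ) : ℝ := 1 - chi1CDF x

noncomputable def psi (x : ℝ) : ℝ := Gc x / pdf1 x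

lemma Gc_eq_tail {x : ℝ} (hx : 0 ≤ x) : Gc x = ∫ t in Ioi x, pdf1 t := by
  have := chi1CDF_plus_tail hx; unfold Gc; linarith

lemma pos_interval {a b : ℝ} (ha : 0 ≤ a) (hab : a < b) : 0 < ∫ t in a..b, pdf1 t := by
  apply intervalIntegral.intervalIntegral_pos_of_pos_on (intervalIntegrable_pdf1 a b)
    (fun t ht => pdf1_pos (lt_of_le_of_lt ha ht.1)) hab

lemma Gc_pos {x : ℝ} (hx : 0 ≤ x) : 0 < Gc x := by
  rw [Gc_eq_tail hx]
  have h1 : 0 < ∫ t in x..(x+1), pdf1 t := pos_interval hx (by linarith)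
  rw [intervalIntegral.integral_of_le (by linarith : x ≤ x+1)] at h1
  refine lt_of_lt_of_le h1 (setIntegral_mono_set (integrableOn_pdf1_Ioi x) ?_ ?_)
  · rw [EventuallyLE, ae_restrict_iff' measurableSet_Ioi]
    exact Eventually.of_forall fun t ht => (pdf1_pos (lt_of_le_of_lt hx ht)).le
  · exact Eventually.of_forall Ioc_subset_Ioi_self

lemma chi1CDF_lt {x y : ℝ} (hx : 0 ≤ x) (hxy : x < y) : chi1CDF x < chi1CDF y := by
  have h := pos_interval hx hxy
  have hsub : chi1CDF y - chi1CDF x = ∫ t in x..y, pdf1 t := by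
    rw [chi1CDF_eq, chi1CDF_eq,
      ← intervalIntegral.integral_interval_sub_left (intervalIntegrable_pdf1 0 y)
        (intervalIntegrable_pdf1 0 x)]
  linarith

lemma chi1CDF_pos {x : ℝ} (hx : 0 < x) : 0 < chi1CDF x := by
  have := chi1CDF_lt le_rfl hx
  simpa [chi1CDF_eq, intervalIntegral.integral_same] using this

lemma hasDerivAt_chi1CDF {x : ℝ} (hx : 0 < x) : HasDerivAt chi1CDF (pdf1 x) x := by
  exact intervalIntegral.integral_hasDerivAt_right (intervalIntegrable_pdf1 0 x)
    (ContinuousAt.stronglyMeasurableAtFilter isOpen_Ioi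
      (fun y hy => continuousAt_pdf1 hy) x hx) (continuousAt_pdf1 hx)

lemma hasDerivAt_Gc {x : ℝ} (hx : 0 < x) : HasDerivAt Gc (-pdf1 x) x := by
  exact (hasDerivAt_chi1CDF hx).const_sub 1

lemma hasDerivAt_psi {x : ℝ} (hx : 0 < x) :
    HasDerivAt psi ((x+1)/(2*x) * psi x - 1) x := by
  have h := (hasDerivAt_Gc hx).div (hasDerivAt_pdf1 hx) (pdf1_pos hx).ne'
  refine h.congr_deriv (Eq.symm ?_)
  unfold psi
  have h1 : pdf1 x ≠ 0 := (pdf1_pos hx).ne'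
  field_simp
  ring

/-! ### Limits at infinity -/

lemma tendsto_Gc : Tendsto Gc atTop (𝓝 0) := by
  have h := intervalIntegral_tendsto_integral_Ioi 0 integrableOn_pdf1 (l := atTop) tendsto_id
  rw [integral_pdf1] at h
  have : Tendsto (fun x => 1 - chi1CDF x) atTop (𝓝 (1 - 1)) := tendsto_const_nhds.sub h
  exact (by simpa using this : Tendsto (fun x => 1 - chi1CDF x) atTop (𝓝 0))

lemma tendsto_w : Tendsto w atTop (𝓝 0) := by
  apply tendsto_of_tendsto_of_tendsto_of_le_of_le' tendsto_const_nhds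
    (tendsto_rpow_neg_atTop (by norm_num : (0:ℝ) < 1/2))
  · filter_upwards [eventually_gt_atTop (0:ℝ)] with x hx using (w_pos hx).le
  · filter_upwards [eventually_gt_atTop (0:ℝ)] with x hx
    unfold w
    rw [show -(1:ℝ)/2 = -(1/2) by norm_num]
    nlinarith [Real.rpow_pos_of_pos hx (-(1/2:ℝ)), Real.exp_le_one_iff.2 (by linarith : -x/2 ≤ 0),
      Real.exp_pos (-x/2)]

lemma psi_mul_w {x : ℝ} (hx : 0 < x) : psi x * w x = Gc x * Real.sqrt (2*π) := by
  unfold psi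
  rw [pdf1_eq]
  field_simp [(w_pos hx).ne']

/-! ### A Gronwall-type comparison principle -/

lemma gronwall (d d' : ℝ → ℝ) (hd : ∀ x ∈ Ioi (0:ℝ), HasDerivAt d (d' x) x)
    (ha : ∀ x ∈ Ioi (0:ℝ), d' x ≤ (x+1)/(2*x) * d x)
    (h0 : Tendsto (fun x => d x * w x) atTop (𝓝 0)) : ∀ x ∈ Ioi (0:ℝ), 0 ≤ d x := by
  set g : ℝ → ℝ := fun x => d x * w x with hg
  have hgd : ∀ x ∈ Ioi (0:ℝ), HasDerivAt g ((d' x - (x+1)/(2*x) * d x) * w x) x := by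
    intro x hx
    have := (hd x hx).mul (hasDerivAt_w hx)
    refine this.congr_deriv (Eq.symm ?_)
    ring
  have hanti : AntitoneOn g (Ioi 0) := by
    apply antitoneOn_of_deriv_nonpos (convex_Ioi 0)
    · exact fun x hx => (hgd x hx).continuousAt.continuousWithinAt
    · rw [interior_Ioi]
      exact fun x hx => (hgd x hx).differentiableAt.differentiableWithinAt
    · rw [interior_Ioi]
      intro x hx
      rw [(hgd x hx).deriv]
      exact mul_nonpos_of_nonpos_of_nonneg (by linarith [ha x hx]) (w_pos hx).le
  intro x hx
  have hgge : 0 ≤ g x := by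
    refine le_of_tendsto h0 ?_
    filter_upwards [eventually_ge_atTop x] with y hy
    exact hanti hx (lt_of_lt_of_le hx hy) hy
  exact (mul_nonneg_iff_of_pos_right (w_pos hx)).1 hgge

/-! ### The upper bound function and algebraic inequalities -/

noncomputable def Uu (x : ℝ) : ℝ := (3*(x+1) + Real.sqrt (x^2+2*x+9)) / (2*(x+2))

lemma sqrt_arg_pos {x : ℝ} (hx : 0 < x) : 0 < x^2+2*x+9 := by nlinarith

lemma D_pos {x : ℝ} (hx : 0 < x) : 0 < Real.sqrt (x^2+2*x+9) :=
  Real.sqrt_pos.2 (sqrt_arg_pos hx)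

lemma D_sq {x : ℝ} (hx : 0 < x) : (Real.sqrt (x^2+2*x+9))^2 = x^2+2*x+9 :=
  Real.sq_sqrt (sqrt_arg_pos hx).le

lemma hasDerivAt_Uu {x : ℝ} (hx : 0 < x) :
    HasDerivAt Uu ((3*Real.sqrt (x^2+2*x+9) + x - 7) /
      (2*(x+2)^2*Real.sqrt (x^2+2*x+9))) x := by
  set D := Real.sqrt (x^2+2*x+9) with hD
  have hD0 := D_pos hx
  have hD2 := D_sq hx
  have hinner : HasDerivAt (fun y : ℝ => y^2+2*y+9) (2*x+2) x := by
    have h := ((hasDerivAt_pow 2 x).add ((hasDerivAt_id x).const_mul 2)).add_const 9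
    refine h.congr_deriv (Eq.symm ?_)
    ring
  have hsq : HasDerivAt (fun y : ℝ => Real.sqrt (y^2+2*y+9)) ((x+1)/D) x := by
    have h := (Real.hasDerivAt_sqrt (sqrt_arg_pos hx).ne').comp x hinner
    refine h.congr_deriv (Eq.symm ?_)
    rw [← hD]
    field_simp
  have hnum : HasDerivAt (fun y : ℝ => 3*(y+1) + Real.sqrt (y^2+2*y+9)) (3 + (x+1)/D) x := by
    have h := (((hasDerivAt_id x).add_const 1).const_mul 3).add hsq
    refine h.congr_deriv (Eq.symm ?_)
    norm_num
  have hden : HasDerivAt (fun y : ℝ => 2*(y+2)) 2 x := by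
    have h := ((hasDerivAt_id x).add_const 2).const_mul 2
    refine h.congr_deriv (Eq.symm ?_)
    norm_num
  have h := hnum.div hden (by positivity : 2*(x+2) ≠ 0)
  refine h.congr_deriv (Eq.symm ?_)
  rw [← hD]
  have hDne : D ≠ 0 := hD0.ne'
  field_simp
  linear_combination hD2

lemma PD_le {x : ℝ} (hx : 0 < x) :
    (x^3+4*x^2+7*x-6) * Real.sqrt (x^2+2*x+9) ≤ x^4+5*x^3+15*x^2+45*x+18 := by
  set D := Real.sqrt (x^2+2*x+9) with hD
  have hD0 := D_pos hx
  have hD2 := D_sq hx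
  have hR : (0:ℝ) < x^4+5*x^3+15*x^2+45*x+18 := by
    have h4 := pow_pos hx 4; have h3 := pow_pos hx 3; have h2 := pow_pos hx 2
    linarith
  rcases le_or_gt (x^3+4*x^2+7*x-6) 0 with h | h
  · nlinarith [mul_nonpos_of_nonpos_of_nonneg h hD0.le]
  · have hsq : ((x^3+4*x^2+7*x-6)*D)^2 = (x^3+4*x^2+7*x-6)^2*(x^2+2*x+9) := by
      rw [mul_pow, hD2]
    have hS : (x^4+5*x^3+15*x^2+45*x+18)^2 - (x^3+4*x^2+7*x-6)^2*(x^2+2*x+9)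
        = 64*x^5+352*x^4+1216*x^3+2688*x^2+2304*x := by ring
    have hSpos : (0:ℝ) ≤ 64*x^5+352*x^4+1216*x^3+2688*x^2+2304*x := by
      have h5 := pow_pos hx 5; have h4 := pow_pos hx 4
      have h3 := pow_pos hx 3; have h2 := pow_pos hx 2
      linarith
    nlinarith [hsq, hS, hSpos, mul_pos h hD0, hR]

lemma U_key {x : ℝ} (hx : 0 < x) :
    (3*Real.sqrt (x^2+2*x+9) + x - 7) / (2*(x+2)^2*Real.sqrt (x^2+2*x+9)) + 1
      ≤ (x+1)/(2*x) * Uu x := by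
  set D := Real.sqrt (x^2+2*x+9) with hD
  have hD0 := D_pos hx
  have hD2 := D_sq hx
  have hPD := PD_le hx
  rw [Uu, ← hD, ← sub_nonneg]
  have key : (x+1)/(2*x) * ((3*(x+1) + D) / (2*(x+2)))
      - ((3*D + x - 7) / (2*(x+2)^2*D) + 1)
      = ((x^4+5*x^3+15*x^2+45*x+18) - (x^3+4*x^2+7*x-6)*D) / (4*x*(x+2)^2*D) := by
    have hDne : D ≠ 0 := hD0.ne'
    field_simp
    linear_combination (4*(x+1)*(x+2)) * hD2
  rw [key]
  apply div_nonneg (by linarith) (by positivity)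

lemma ML_ineq {x : ℝ} (hx : 0 < x) : -x^2-2*x+3 ≤ (x+1) * Real.sqrt (x^2+2*x+9) := by
  have hD0 := D_pos hx
  have hD2 := D_sq hx
  rcases le_or_gt (-x^2-2*x+3) 0 with h | h
  · nlinarith [mul_pos (by linarith : (0:ℝ) < x+1) hD0]
  · nlinarith [mul_pos (by linarith : (0:ℝ) < x+1) hD0, hD2, sq_nonneg x]

lemma Q_nonpos {x p : ℝ} (hx : 0 < x) (hM : 2*x/(x+1) ≤ p) (hU : p ≤ Uu x) :
    (x+2)*p^2 - 3*(x+1)*p + 2*x ≤ 0 := by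
  set D := Real.sqrt (x^2+2*x+9) with hD
  have hD0 := D_pos hx
  have hD2 := D_sq hx
  have hx1 : (0:ℝ) < x+1 := by linarith
  have hA : 0 ≤ 3*(x+1) + D - 2*(x+2)*p := by
    rw [Uu, ← hD] at hU
    have h := (le_div_iff₀ (by positivity : (0:ℝ) < 2*(x+2))).1 hU
    nlinarith [h]
  have hB : 0 ≤ 2*(x+2)*p - 3*(x+1) + D := by
    have hm := (div_le_iff₀ hx1).1 hM
    have hm2 := mul_le_mul_of_nonneg_right hm (by positivity : (0:ℝ) ≤ 2*(x+2))
    have h3 := ML_ineq hx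
    rw [← hD] at h3
    nlinarith [hm2, h3, hx1, hD0]
  nlinarith [mul_nonneg hA hB, hD2]

/-! ### Bounds on psi -/

lemma hasDerivAt_Mm {x : ℝ} (hx : 0 < x) :
    HasDerivAt (fun y : ℝ => 2*y/(y+1)) (2/(x+1)^2) x := by
  have h := (((hasDerivAt_id x).const_mul 2).div ((hasDerivAt_id x).add_const 1)
    (by positivity : x + 1 ≠ 0))
  refine h.congr_deriv (Eq.symm ?_)
  simp only [id]
  field_simp
  ring

lemma tendsto_Mm : Tendsto (fun x : ℝ => 2*x/(x+1)) atTop (𝓝 2) := by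
  have h : Tendsto (fun x : ℝ => 2 - 2/(x+1)) atTop (𝓝 (2 - 0)) := by
    apply tendsto_const_nhds.sub
    exact Tendsto.div_atTop tendsto_const_nhds (tendsto_atTop_add_const_right _ 1 tendsto_id)
  rw [sub_zero] at h
  apply h.congr'
  filter_upwards [eventually_gt_atTop (0:ℝ)] with x hx
  field_simp
  ring

lemma psi_ge_M : ∀ x ∈ Ioi (0:ℝ), 2*x/(x+1) ≤ psi x := by
  have h := gronwall (fun x => psi x - 2*x/(x+1))
    (fun x => ((x+1)/(2*x) * psi x - 1) - 2/(x+1)^2) ?_ ?_ ?_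
  · intro x hx; have := h x hx; simpa [sub_nonneg] using this
  · exact fun x hx => (hasDerivAt_psi hx).sub (hasDerivAt_Mm hx)
  · intro x hx
    simp only [Set.mem_Ioi] at hx
    have hcM : (x+1)/(2*x) * (2*x/(x+1)) = 1 := by
      field_simp
    have hpos : (0:ℝ) < 2/(x+1)^2 := by positivity
    nlinarith [hcM, hpos]
  · have heq : ∀ᶠ x in atTop, Gc x * Real.sqrt (2*π) - 2*x/(x+1) * w x
        = (psi x - 2*x/(x+1)) * w x := by
      filter_upwards [eventually_gt_atTop (0:ℝ)] with x hx
      rw [sub_mul, psi_mul_w hx]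
    apply Tendsto.congr' heq
    have h1 : Tendsto (fun x => Gc x * Real.sqrt (2*π)) atTop (𝓝 (0 * Real.sqrt (2*π))) :=
      tendsto_Gc.mul_const _
    have h2 : Tendsto (fun x => 2*x/(x+1) * w x) atTop (𝓝 (2 * 0)) := tendsto_Mm.mul tendsto_w
    simpa using h1.sub h2

lemma psi_gt_M : ∀ x ∈ Ioi (0:ℝ), 2*x/(x+1) < psi x := by
  intro x hx
  simp only [Set.mem_Ioi] at hx
  rcases lt_or_eq_of_le (psi_ge_M x hx) with h | h
  · exact h
  exfalso
  set d : ℝ → ℝ := fun y => psi y - 2*y/(y+1) with hd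
  have hmin : IsLocalMin d x := by
    have : ∀ᶠ y in 𝓝 x, d x ≤ d y := by
      filter_upwards [isOpen_Ioi.mem_nhds (show x ∈ Ioi (0:ℝ) from hx)] with y hy
      have := psi_ge_M y hy
      simp only [hd, ← h]
      linarith
    exact this
  have hder : HasDerivAt d (((x+1)/(2*x) * psi x - 1) - 2/(x+1)^2) x :=
    (hasDerivAt_psi hx).sub (hasDerivAt_Mm hx)
  have h0 := hmin.deriv_eq_zero
  rw [hder.deriv] at h0
  have hcM : (x+1)/(2*x) * (2*x/(x+1)) = 1 := by field_simp
  rw [← h] at h0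
  have : (0:ℝ) < 2/(x+1)^2 := by positivity
  nlinarith [h0, hcM]

lemma Uu_le_two {x : ℝ} (hx : 0 < x) : Uu x ≤ 2 := by
  have hD : Real.sqrt (x^2+2*x+9) ≤ x+3 := by
    rw [show x+3 = Real.sqrt ((x+3)^2) by rw [Real.sqrt_sq (by linarith)]]
    exact Real.sqrt_le_sqrt (by nlinarith)
  rw [Uu, div_le_iff₀ (by positivity)]
  linarith

lemma Uu_nonneg {x : ℝ} (hx : 0 < x) : 0 ≤ Uu x :=
  div_nonneg (by linarith [(D_pos hx).le]) (by positivity)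

lemma psi_le_U : ∀ x ∈ Ioi (0:ℝ), psi x ≤ Uu x := by
  have h := gronwall (fun x => Uu x - psi x)
    (fun x => (3*Real.sqrt (x^2+2*x+9) + x - 7) / (2*(x+2)^2*Real.sqrt (x^2+2*x+9))
      - ((x+1)/(2*x) * psi x - 1)) ?_ ?_ ?_
  · intro x hx; have := h x hx; simpa [sub_nonneg] using this
  · exact fun x hx => (hasDerivAt_Uu hx).sub (hasDerivAt_psi hx)
  · intro x hx
    simp only [Set.mem_Ioi] at hx
    have := U_key hx
    nlinarith [this]
  · have heq : ∀ᶠ x in atTop, Uu x * w x - Gc x * Real.sqrt (2*π)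
        = (Uu x - psi x) * w x := by
      filter_upwards [eventually_gt_atTop (0:ℝ)] with x hx
      rw [sub_mul, psi_mul_w hx]
    apply Tendsto.congr' heq
    have h1 : Tendsto (fun x => Uu x * w x) atTop (𝓝 0) := by
      have h2w : Tendsto (fun x => 2 * w x) atTop (𝓝 (2 * 0)) := tendsto_w.const_mul 2
      rw [mul_zero] at h2w
      apply tendsto_of_tendsto_of_tendsto_of_le_of_le' tendsto_const_nhds h2w
      · filter_upwards [eventually_gt_atTop (0:ℝ)] with x hx
        exact mul_nonneg (Uu_nonneg hx) (w_pos hx).le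
      · filter_upwards [eventually_gt_atTop (0:ℝ)] with x hx
        exact mul_le_mul_of_nonneg_right (Uu_le_two hx) (w_pos hx).le
    have h2 : Tendsto (fun x => Gc x * Real.sqrt (2*π)) atTop (𝓝 (0 * Real.sqrt (2*π))) :=
      tendsto_Gc.mul_const _
    simpa using h1.sub h2

/-! ### Monotonicity and concavity data for psi -/

lemma strictMonoOn_psi : StrictMonoOn psi (Ioi (0:ℝ)) := by
  apply strictMonoOn_of_deriv_pos (convex_Ioi 0)
  · exact fun x hx => (hasDerivAt_psi hx).continuousAt.continuousWithinAt
  · rw [interior_Ioi]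
    intro x hx
    rw [(hasDerivAt_psi hx).deriv]
    have hM := psi_gt_M x hx
    simp only [mem_Ioi] at hx
    have hc : (0:ℝ) < (x+1)/(2*x) := by positivity
    have hcM : (x+1)/(2*x) * (2*x/(x+1)) = 1 := by field_simp
    nlinarith [mul_lt_mul_of_pos_left hM hc]

noncomputable def Phi (x : ℝ) : ℝ := ((x+1)/(2*x) * psi x - 1) * psi x

lemma hasDerivAt_c {x : ℝ} (hx : 0 < x) :
    HasDerivAt (fun y : ℝ => (y+1)/(2*y)) (-(1/(2*x^2))) x := by
  have h := ((hasDerivAt_id x).add_const 1).div ((hasDerivAt_id x).const_mul 2)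
    (by positivity : 2*x ≠ 0)
  refine h.congr_deriv (Eq.symm ?_)
  simp only [id]
  field_simp
  ring

lemma hasDerivAt_Phi {x : ℝ} (hx : 0 < x) :
    HasDerivAt Phi ((-(1/(2*x^2)) * psi x + (x+1)/(2*x) * ((x+1)/(2*x) * psi x - 1))
      * psi x + ((x+1)/(2*x) * psi x - 1) * ((x+1)/(2*x) * psi x - 1)) x := by
  exact (((hasDerivAt_c hx).mul (hasDerivAt_psi hx)).sub_const 1).mul (hasDerivAt_psi hx)

lemma antitoneOn_Phi : AntitoneOn Phi (Ioi (0:ℝ)) := by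
  apply antitoneOn_of_deriv_nonpos (convex_Ioi 0)
  · exact fun x hx => (hasDerivAt_Phi hx).continuousAt.continuousWithinAt
  · rw [interior_Ioi]
    exact fun x hx => (hasDerivAt_Phi hx).differentiableAt.differentiableWithinAt
  · rw [interior_Ioi]
    intro x hx
    rw [(hasDerivAt_Phi hx).deriv]
    simp only [mem_Ioi] at hx
    have hQ := Q_nonpos hx (psi_gt_M x hx).le (psi_le_U x hx)
    have hEq : (-(1/(2*x^2)) * psi x + (x+1)/(2*x) * ((x+1)/(2*x) * psi x - 1))
        * psi x + ((x+1)/(2*x) * psi x - 1) * ((x+1)/(2*x) * psi x - 1)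
        = ((x+2)*(psi x)^2 - 3*(x+1)*psi x + 2*x) / (2*x) := by
      field_simp
      ring
    rw [hEq]
    exact div_nonpos_of_nonpos_of_nonneg hQ (by positivity)

end ChiAux

open ChiAux in
/-- Properties of `H̃' = (F⁻¹ ∘ G)'` where `F` is the χ²₁ CDF and `G(v) = 1 - e^{-v}`:
`H̃'` is positive, (strictly) increasing and concave on `(0,∞)`, and `H̃'(v) → 2` as
`v → ∞`.  The function `H` is characterized on `(0,∞)` by `F(H v) = 1 - e^{-v}`, `H v > 0`. -/
theorem tildeH_deriv_properties (H : ℝ → ℝ)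
    (hH : ∀ v ∈ Set.Ioi (0:ℝ), 0 < H v ∧ chi1CDF (H v) = 1 - Real.exp (-v)) :
    (∀ v ∈ Set.Ioi (0:ℝ), 0 < deriv H v) ∧
    StrictMonoOn (deriv H) (Set.Ioi 0) ∧
    ConcaveOn ℝ (Set.Ioi 0) (deriv H) ∧
    Tendsto (deriv H) atTop (nhds 2) := by
  have hpos : ∀ v ∈ Set.Ioi (0:ℝ), 0 < H v := fun v hv => (hH v hv).1
  have hFH : ∀ v ∈ Set.Ioi (0:ℝ), chi1CDF (H v) = 1 - Real.exp (-v) :=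
    fun v hv => (hH v hv).2
  have hGcH : ∀ v ∈ Set.Ioi (0:ℝ), Gc (H v) = Real.exp (-v) := by
    intro v hv; rw [Gc, hFH v hv]; ring
  -- strict monotonicity of H
  have hHmono : StrictMonoOn H (Set.Ioi (0:ℝ)) := by
    intro v1 h1 v2 h2 h12
    by_contra hc
    push_neg at hc
    have hFlt : chi1CDF (H v1) < chi1CDF (H v2) := by
      rw [hFH v1 h1, hFH v2 h2]
      have : Real.exp (-v2) < Real.exp (-v1) := Real.exp_lt_exp.2 (by linarith)
      linarith
    rcases eq_or_lt_of_le hc with he | hlt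
    · rw [he] at hFlt; exact lt_irrefl _ hFlt
    · exact absurd (chi1CDF_lt (hpos v2 h2).le hlt) (by linarith)
  -- surjectivity of H onto Ioi 0
  have hsurj : ∀ x ∈ Set.Ioi (0:ℝ), ∃ v ∈ Set.Ioi (0:ℝ), H v = x := by
    intro x hx
    simp only [Set.mem_Ioi] at hx
    have hGx : 0 < Gc x := Gc_pos hx.le
    have hGx1 : Gc x < 1 := by have := chi1CDF_pos hx; rw [Gc]; linarith
    refine ⟨-Real.log (Gc x), ?_, ?_⟩
    · simp only [Set.mem_Ioi]
      have := Real.log_neg hGx hGx1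
      linarith
    · have hv : -Real.log (Gc x) ∈ Set.Ioi (0:ℝ) := by
        simp only [Set.mem_Ioi]; have := Real.log_neg hGx hGx1; linarith
      have hFeq : chi1CDF (H (-Real.log (Gc x))) = chi1CDF x := by
        rw [hFH _ hv, neg_neg, Real.exp_log hGx, Gc]; ring
      rcases lt_trichotomy (H (-Real.log (Gc x))) x with h | h | h
      · exact absurd (chi1CDF_lt (hpos _ hv).le h) (by rw [hFeq]; exact lt_irrefl _)
      · exact h
      · exact absurd (chi1CDF_lt hx.le h) (by rw [hFeq]; exact lt_irrefl _)
  -- continuity of H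
  have hcont : ∀ v ∈ Set.Ioi (0:ℝ), ContinuousAt H v := by
    intro v hv
    apply hHmono.continuousAt_of_image_mem_nhds (isOpen_Ioi.mem_nhds hv)
    apply Filter.mem_of_superset (isOpen_Ioi.mem_nhds (hpos v hv))
    intro x hx
    obtain ⟨v', hv', he⟩ := hsurj x hx
    exact ⟨v', hv', he⟩
  -- derivative of H
  have hHderiv : ∀ v ∈ Set.Ioi (0:ℝ), HasDerivAt H (psi (H v)) v := by
    intro v hv
    have hx : 0 < H v := hpos v hv
    have hGc0 : 0 < Gc (H v) := Gc_pos hx.le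
    have hV : HasDerivAt (fun x => -Real.log (Gc x)) (pdf1 (H v) / Gc (H v)) (H v) := by
      have hlog := (Real.hasDerivAt_log hGc0.ne').comp (H v) (hasDerivAt_Gc hx)
      have := hlog.neg
      refine this.congr_deriv (Eq.symm ?_)
      field_simp
    have hne : pdf1 (H v) / Gc (H v) ≠ 0 := (div_pos (pdf1_pos hx) hGc0).ne'
    have hfg : ∀ᶠ y in nhds v, -Real.log (Gc (H y)) = y := by
      filter_upwards [isOpen_Ioi.mem_nhds hv] with y hy
      rw [hGcH y hy, Real.log_exp, neg_neg]
    have h := HasDerivAt.of_local_left_inverse (hcont v hv) hV hne hfg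
    refine h.congr_deriv (Eq.symm ?_)
    rw [psi, inv_div]
  have hderiv_eq : ∀ v ∈ Set.Ioi (0:ℝ), deriv H v = psi (H v) :=
    fun v hv => (hHderiv v hv).deriv
  -- H tends to infinity
  have htop : Tendsto H atTop atTop := by
    rw [tendsto_atTop]
    intro b
    obtain ⟨v0, hv0, hHv0⟩ := hsurj (max b 1) (by simp only [Set.mem_Ioi]; positivity)
    filter_upwards [eventually_ge_atTop (max v0 1)] with v hv
    have hv1 : (1:ℝ) ≤ v := le_trans (le_max_right _ _) hv
    have hvmem : v ∈ Set.Ioi (0:ℝ) := by simp only [Set.mem_Ioi]; linarith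
    have : H v0 ≤ H v := hHmono.monotoneOn hv0 hvmem (le_trans (le_max_left _ _) hv)
    rw [hHv0] at this
    exact le_trans (le_max_left _ _) this
  -- eventual equality for deriv H
  have hev : ∀ v ∈ Set.Ioi (0:ℝ), deriv H =ᶠ[nhds v] (fun y => psi (H y)) := by
    intro v hv
    filter_upwards [isOpen_Ioi.mem_nhds hv] with y hy
    exact hderiv_eq y hy
  refine ⟨?_, ?_, ?_, ?_⟩
  · intro v hv
    rw [hderiv_eq v hv]
    have hx : 0 < H v := hpos v hv
    have : (0:ℝ) < 2*(H v)/(H v+1) := by positivity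
    linarith [psi_gt_M (H v) hx]
  · intro v1 h1 v2 h2 h12
    rw [hderiv_eq v1 h1, hderiv_eq v2 h2]
    exact strictMonoOn_psi (hpos v1 h1) (hpos v2 h2) (hHmono h1 h2 h12)
  · apply AntitoneOn.concaveOn_of_deriv (convex_Ioi 0)
    · apply ContinuousOn.congr (f := fun y => psi (H y)) ?_ (fun v hv => hderiv_eq v hv)
      exact fun v hv => ((hasDerivAt_psi (hpos v hv)).continuousAt.comp
        (hcont v hv)).continuousWithinAt
    · rw [interior_Ioi]
      intro v hv
      have hdiff : DifferentiableAt ℝ (fun y => psi (H y)) v :=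
        ((hasDerivAt_psi (hpos v hv)).comp v (hHderiv v hv)).differentiableAt
      exact (hdiff.congr_of_eventuallyEq (hev v hv)).differentiableWithinAt
    · rw [interior_Ioi]
      intro v1 h1 v2 h2 h12
      have hd : ∀ v ∈ Set.Ioi (0:ℝ), deriv (deriv H) v = Phi (H v) := by
        intro v hv
        rw [Filter.EventuallyEq.deriv_eq (hev v hv),
          show (fun y => psi (H y)) = psi ∘ H from rfl,
          ((hasDerivAt_psi (hpos v hv)).comp v (hHderiv v hv)).deriv, Phi]
      rw [hd v1 h1, hd v2 h2]
      exact antitoneOn_Phi (hpos v1 h1) (hpos v2 h2) (hHmono.monotoneOn h1 h2 h12)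
  · have hlow : Tendsto (fun v => 2*(H v)/(H v + 1)) atTop (nhds 2) := tendsto_Mm.comp htop
    apply tendsto_of_tendsto_of_tendsto_of_le_of_le' hlow tendsto_const_nhds
    · filter_upwards [eventually_gt_atTop (0:ℝ)] with v hv
      rw [hderiv_eq v hv]
      exact (psi_gt_M (H v) (hpos v hv)).le
    · filter_upwards [eventually_gt_atTop (0:ℝ)] with v hv
      rw [hderiv_eq v hv]
      exact le_trans (psi_le_U (H v) (hpos v hv)) (Uu_le_two (hpos v hv))
end

section
/- With $\tilde H=F^{-1}\circ G$ where $F$ is the $\chi^2_1$ CDF and $G$ the standard exponential CDF, the second derivative $\tilde H''$ is a positive decreasing function on $(0,\infty)$ and $\tilde H''(v)\to 0$ as $v\to\infty$. -/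
open Filter Real Set

open MeasureTheory intervalIntegral



noncomputable def pdf1 (t : ℝ) : ℝ := t ^ (-(1:ℝ)/2) * Real.exp (-t/2) / Real.sqrt (2 * π)

lemma pdf1_pos {t : ℝ} (ht : 0 < t) : 0 < pdf1 t := by
  unfold pdf1
  have : (0:ℝ) < Real.sqrt (2*π) := Real.sqrt_pos.2 (by positivity)
  positivity

lemma pdf1_nonneg (t : ℝ) : 0 ≤ pdf1 t := by
  rcases le_or_gt t 0 with h | h
  · unfold pdf1
    rcases eq_or_lt_of_le h with h' | h'
    · simp [h', Real.zero_rpow (by norm_num : (-(1:ℝ)/2) ≠ 0)]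
    · rw [Real.rpow_def_of_neg h']
      have : Real.cos (-(1:ℝ)/2 * π) = 0 := by
        rw [show (-(1:ℝ)/2 * π) = -(π/2) by ring, Real.cos_neg, Real.cos_pi_div_two]
      simp [this]
  · exact (pdf1_pos h).le

lemma continuousAt_pdf1 {t : ℝ} (ht : 0 < t) : ContinuousAt pdf1 t := by
  unfold pdf1
  have h1 : ContinuousAt (fun t : ℝ => t ^ (-(1:ℝ)/2)) t :=
    (Real.continuousAt_rpow_const t _ (Or.inl ht.ne')).comp (continuousAt_id)
  fun_prop (disch := exact Or.inl ht.ne')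

lemma hasDerivAt_pdf1 {t : ℝ} (ht : 0 < t) :
    HasDerivAt pdf1 (pdf1 t * (-(t+1)/(2*t))) t := by
  have h1 : HasDerivAt (fun t : ℝ => t ^ (-(1:ℝ)/2)) (-(1:ℝ)/2 * t ^ ((-(1:ℝ)/2) - 1)) t :=
    Real.hasDerivAt_rpow_const (Or.inl ht.ne')
  have h2 : HasDerivAt (fun t : ℝ => Real.exp (-t/2)) (Real.exp (-t/2) * (-1/2)) t := by
    have := (Real.hasDerivAt_exp (-t/2)).comp t ((hasDerivAt_id t).neg.div_const 2)
    exact this.congr_deriv (by ring)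
  have h3 := (h1.mul h2).div_const (Real.sqrt (2*π))
  refine h3.congr_deriv (Eq.symm ?_)
  unfold pdf1
  have h4 : t ^ ((-(1:ℝ)/2) - 1) = t ^ (-(1:ℝ)/2) / t := by
    rw [Real.rpow_sub ht, Real.rpow_one]
  rw [h4]
  field_simp
  ring



lemma sqrt2pi_pos : (0:ℝ) < Real.sqrt (2*π) := Real.sqrt_pos.2 (by positivity)

lemma integrableOn_pdf1core (a : ℝ) (ha : 0 < a) :
    IntegrableOn (fun t : ℝ => t ^ (-(1:ℝ)/2) * Real.exp (-t/2)) (Ioi a) := by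
  have hbd : ∀ t ∈ Ioi a, ‖(t:ℝ) ^ (-(1:ℝ)/2) * Real.exp (-t/2)‖
      ≤ a ^ (-(1:ℝ)/2) * Real.exp (-(1/2) * t) := by
    intro t ht
    have ht0 : 0 < t := lt_trans ha ht
    rw [Real.norm_eq_abs, abs_of_nonneg (by positivity)]
    have h1 : t ^ (-(1:ℝ)/2) ≤ a ^ (-(1:ℝ)/2) :=
      Real.rpow_le_rpow_of_nonpos ha (le_of_lt ht) (by norm_num)
    have h2 : Real.exp (-t/2) = Real.exp (-(1/2)*t) := by ring_nf
    rw [h2]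
    exact mul_le_mul_of_nonneg_right h1 (Real.exp_nonneg _)
  apply Integrable.mono' ((exp_neg_integrableOn_Ioi a (by norm_num : (0:ℝ) < 1/2)).const_mul
    (a ^ (-(1:ℝ)/2)))
  · apply ContinuousOn.aestronglyMeasurable _ measurableSet_Ioi
    intro t ht
    have : t ≠ 0 := (lt_trans ha ht).ne'
    apply ContinuousAt.continuousWithinAt
    fun_prop (disch := exact Or.inl this)
  · exact (ae_restrict_iff' measurableSet_Ioi).2 (ae_of_all _ hbd)

lemma pdf1_mass_core : ∫ t in Ioi (0:ℝ), t ^ (-(1:ℝ)/2) * Real.exp (-t/2) = Real.sqrt (2*π) := by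
  have h := integral_rpow_mul_exp_neg_mul_rpow (p := 1) (q := -(1:ℝ)/2) (b := 1/2)
    one_pos (by norm_num) (by norm_num)
  simp only [Real.rpow_one] at h
  have h2 : ∫ x in Ioi (0:ℝ), x ^ (-(1:ℝ)/2) * Real.exp (-x/2)
      = (1/2 : ℝ) ^ (-(-(1:ℝ)/2 + 1)/1) * (1/1) * Real.Gamma ((-(1:ℝ)/2 + 1)/1) := by
    rw [← h]
    refine setIntegral_congr_fun measurableSet_Ioi (fun x hx => ?_)
    ring_nf
  have h3 : (-(-(1:ℝ)/2 + 1)/1) = (-(1/2) : ℝ) := by norm_num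
  have h4 : ((-(1:ℝ)/2 + 1)/1) = (1/2 : ℝ) := by norm_num
  rw [h3, h4, Real.Gamma_one_half_eq] at h2
  have h5 : (1/2 : ℝ) ^ (-(1/2:ℝ)) = Real.sqrt 2 := by
    rw [Real.rpow_neg (by norm_num), show (1/2:ℝ) = 2⁻¹ by norm_num,
      Real.inv_rpow (by norm_num), inv_inv, Real.sqrt_eq_rpow]
    norm_num
  rw [h2, h5]
  rw [show Real.sqrt 2 * (1/1) * Real.sqrt π = Real.sqrt 2 * Real.sqrt π by ring]
  rw [← Real.sqrt_mul (by norm_num)]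

lemma pdf1_mass : ∫ t in Ioi (0:ℝ), pdf1 t = 1 := by
  unfold pdf1
  rw [MeasureTheory.integral_div, pdf1_mass_core, div_self sqrt2pi_pos.ne']

noncomputable def surv (s : ℝ) : ℝ := ∫ t in Ioi s, pdf1 t

lemma chi1CDF_eq (y : ℝ) : chi1CDF y = ∫ t in (0:ℝ)..y, pdf1 t := rfl

lemma intervalIntegrable_pdf1 (a b : ℝ) : IntervalIntegrable pdf1 volume a b := by
  have h1 : IntervalIntegrable (fun t : ℝ => t ^ (-(1:ℝ)/2)) volume a b :=
    intervalIntegral.intervalIntegrable_rpow' (by norm_num)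
  have h2 := (h1.mul_continuousOn (g := fun t => Real.exp (-t/2)) (by fun_prop)).div_const
    (Real.sqrt (2*π))
  exact h2

lemma pdf1_continuousOn : ContinuousOn pdf1 (Ioi 0) := by
  intro t ht
  apply ContinuousAt.continuousWithinAt
  have : t ≠ 0 := (ne_of_gt ht)
  unfold pdf1
  fun_prop (disch := exact Or.inl this)

lemma integrableOn_pdf1_Ioi {a : ℝ} (ha : 0 ≤ a) : IntegrableOn pdf1 (Ioi a) := by
  have h1 : IntegrableOn pdf1 (Ioc a (a+1)) := by
    rw [← intervalIntegrable_iff_integrableOn_Ioc_of_le (by linarith)]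
    exact intervalIntegrable_pdf1 a (a+1)
  have h2 : IntegrableOn pdf1 (Ioi (a+1)) := by
    have hc := integrableOn_pdf1core (a+1) (by linarith)
    have : IntegrableOn (fun t => (fun t : ℝ => t ^ (-(1:ℝ)/2) * Real.exp (-t/2)) t / Real.sqrt (2*π)) (Ioi (a+1)) := hc.div_const _
    exact this
  have := h1.union h2
  rwa [Ioc_union_Ioi_eq_Ioi (by linarith : a ≤ a + 1)] at this

lemma chi1CDF_add_surv {s : ℝ} (hs : 0 ≤ s) : chi1CDF s + surv s = 1 := by
  rw [chi1CDF_eq, intervalIntegral.integral_of_le hs, ← pdf1_mass, surv]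
  rw [← setIntegral_union (Ioc_disjoint_Ioi le_rfl) measurableSet_Ioi
    ((intervalIntegrable_pdf1 0 s).1.mono_set (by simp [hs])) (integrableOn_pdf1_Ioi hs)]
  · rw [Ioc_union_Ioi_eq_Ioi hs]

lemma hasDerivAt_chi1CDF {s : ℝ} (hs : 0 < s) : HasDerivAt chi1CDF (pdf1 s) s := by
  have hca : ContinuousAt pdf1 s := pdf1_continuousOn.continuousAt (Ioi_mem_nhds hs)
  exact intervalIntegral.integral_hasDerivAt_right (intervalIntegrable_pdf1 0 s)
    (ContinuousOn.stronglyMeasurableAtFilter isOpen_Ioi pdf1_continuousOn s hs) hca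


lemma hasDerivAt_surv {s : ℝ} (hs : 0 < s) : HasDerivAt surv (-pdf1 s) s := by
  have heq : surv =ᶠ[nhds s] (fun x => 1 - chi1CDF x) := by
    filter_upwards [Ioi_mem_nhds hs] with x hx
    have := chi1CDF_add_surv (le_of_lt (mem_Ioi.1 hx))
    linarith
  exact HasDerivAt.congr_of_eventuallyEq (by simpa using (hasDerivAt_chi1CDF hs).const_sub 1) heq

lemma tendsto_pdf1_atTop : Tendsto pdf1 atTop (nhds 0) := by
  apply squeeze_zero' (Filter.Eventually.of_forall pdf1_nonneg)
  · filter_upwards [eventually_ge_atTop 1] with t ht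
    show pdf1 t ≤ Real.exp (-t/2) / Real.sqrt (2*π)
    unfold pdf1
    have h1 : t ^ (-(1:ℝ)/2) ≤ 1 := by
      calc t ^ (-(1:ℝ)/2) ≤ (1:ℝ) ^ (-(1:ℝ)/2) :=
        Real.rpow_le_rpow_of_nonpos one_pos ht (by norm_num)
      _ = 1 := Real.one_rpow _
    have h2 := mul_le_mul_of_nonneg_right h1 (Real.exp_nonneg (-t/2))
    rw [one_mul] at h2
    exact div_le_div_of_nonneg_right h2 sqrt2pi_pos.le
  · have h3 : Tendsto (fun t : ℝ => Real.exp (-t/2)) atTop (nhds 0) := by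
      have := Real.tendsto_exp_neg_atTop_nhds_zero.comp (tendsto_id.atTop_div_const (by norm_num : (0:ℝ)<2))
      apply this.congr; intro t; simp [Function.comp, neg_div]
    simpa using h3.div_const (Real.sqrt (2*π))

lemma tendsto_chi1CDF_atTop : Tendsto chi1CDF atTop (nhds 1) := by
  have := intervalIntegral_tendsto_integral_Ioi 0 (integrableOn_pdf1_Ioi le_rfl) tendsto_id
  rw [pdf1_mass] at this
  apply this.congr
  intro b
  rw [chi1CDF]
  rfl

lemma tendsto_surv_atTop : Tendsto surv atTop (nhds 0) := by
  have h : ∀ᶠ s in atTop, surv s = 1 - chi1CDF s := by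
    filter_upwards [eventually_ge_atTop 0] with s hs
    have := chi1CDF_add_surv hs; linarith
  rw [show (0:ℝ) = 1 - 1 by ring]
  exact Tendsto.congr' (h.mono fun s hs => hs.symm) ((tendsto_const_nhds).sub tendsto_chi1CDF_atTop)



lemma pos_of_tendsto_zero {g g' : ℝ → ℝ} (hd : ∀ s ∈ Ioi (0:ℝ), HasDerivAt g (g' s) s)
    (hneg : ∀ s ∈ Ioi (0:ℝ), g' s < 0) (hlim : Tendsto g atTop (nhds 0)) :
    ∀ s ∈ Ioi (0:ℝ), 0 < g s := by
  have hanti : StrictAntiOn g (Ioi 0) := by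
    apply strictAntiOn_of_deriv_neg (convex_Ioi 0)
    · exact fun s hs => ((hd s hs).continuousAt).continuousWithinAt
    · rw [interior_Ioi]
      intro x hx
      rw [(hd x hx).deriv]
      exact hneg x hx
  intro s hs
  have h1 : g (s+1) < g s := hanti hs (by simp at hs ⊢; linarith) (by linarith)
  have h2 : (0:ℝ) ≤ g (s+1) := by
    apply le_of_tendsto hlim
    filter_upwards [eventually_gt_atTop (s+1)] with t ht
    exact (hanti (by simp at hs ⊢; linarith) (by simp at hs ⊢; linarith) ht).le
  linarith

lemma mills_lower {s : ℝ} (hs : 0 < s) : 2*s/(s+1) * pdf1 s < surv s := by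
  have key : ∀ x ∈ Ioi (0:ℝ), 0 < surv x - 2*x/(x+1) * pdf1 x := by
    apply pos_of_tendsto_zero (g' := fun x => -(2/(x+1)^2) * pdf1 x)
    · intro x hx
      rw [mem_Ioi] at hx
      have hx1 : x + 1 ≠ 0 := by linarith
      have hw : HasDerivAt (fun x : ℝ => 2*x/(x+1)) (2/(x+1)^2) x := by
        have := ((hasDerivAt_id x).const_mul 2).div ((hasDerivAt_id x).add_const 1) hx1
        refine this.congr_deriv (Eq.symm ?_)
        simp only [id]
        field_simp; ring
      have := (hasDerivAt_surv hx).sub (hw.mul (hasDerivAt_pdf1 hx))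
      refine this.congr_deriv (Eq.symm ?_)
      have hx0 : x ≠ 0 := hx.ne'
      field_simp
      ring
    · intro x hx
      rw [mem_Ioi] at hx
      have : (0:ℝ) < 2/(x+1)^2 := by positivity
      have := pdf1_pos hx
      nlinarith
    · rw [show (0:ℝ) = 0 - 0 by ring]
      apply Tendsto.sub tendsto_surv_atTop
      apply squeeze_zero' (f := fun x => 2*x/(x+1) * pdf1 x) (g := fun x => 2 * pdf1 x)
      · filter_upwards [eventually_gt_atTop 0] with x hx
        have := pdf1_nonneg x; positivity
      · filter_upwards [eventually_gt_atTop 0] with x hx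
        have h1 : 2*x/(x+1) ≤ 2 := by
          rw [div_le_iff₀ (by linarith)]; linarith
        exact mul_le_mul_of_nonneg_right h1 (pdf1_nonneg x)
      · simpa using tendsto_pdf1_atTop.const_mul 2
  linarith [key s (mem_Ioi.2 hs)]

lemma mills_upper {s : ℝ} (hs : 0 < s) : surv s < 2*(s+2)/(s+3) * pdf1 s := by
  have key : ∀ x ∈ Ioi (0:ℝ), 0 < 2*(x+2)/(x+3) * pdf1 x - surv x := by
    apply pos_of_tendsto_zero (g' := fun x => -(6/(x*(x+3)^2)) * pdf1 x)
    · intro x hx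
      rw [mem_Ioi] at hx
      have hx3 : x + 3 ≠ 0 := by linarith
      have hw : HasDerivAt (fun x : ℝ => 2*(x+2)/(x+3)) (2/(x+3)^2) x := by
        have := (((hasDerivAt_id x).add_const 2).const_mul 2).div ((hasDerivAt_id x).add_const 3) hx3
        refine this.congr_deriv (Eq.symm ?_)
        simp only [id]
        field_simp; ring
      have := (hw.mul (hasDerivAt_pdf1 hx)).sub (hasDerivAt_surv hx)
      refine this.congr_deriv (Eq.symm ?_)
      have hx0 : x ≠ 0 := hx.ne'
      field_simp
      ring
    · intro x hx
      rw [mem_Ioi] at hx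
      have : (0:ℝ) < 6/(x*(x+3)^2) := by positivity
      have := pdf1_pos hx
      nlinarith
    · rw [show (0:ℝ) = 0 - 0 by ring]
      refine Tendsto.sub ?_ tendsto_surv_atTop
      apply squeeze_zero' (f := fun x => 2*(x+2)/(x+3) * pdf1 x) (g := fun x => 2 * pdf1 x)
      · filter_upwards [eventually_gt_atTop 0] with x hx
        have := pdf1_nonneg x; positivity
      · filter_upwards [eventually_gt_atTop 0] with x hx
        have h1 : 2*(x+2)/(x+3) ≤ 2 := by
          rw [div_le_iff₀ (by linarith)]; linarith
        exact mul_le_mul_of_nonneg_right h1 (pdf1_nonneg x)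
      · simpa using tendsto_pdf1_atTop.const_mul 2
  linarith [key s (mem_Ioi.2 hs)]

noncomputable def phi (s : ℝ) : ℝ := surv s / pdf1 s
noncomputable def psi (s : ℝ) : ℝ := phi s * ((s+1)/(2*s) * phi s - 1)


lemma phi_lower {s : ℝ} (hs : 0 < s) : 2*s/(s+1) < phi s :=
  (lt_div_iff₀ (pdf1_pos hs)).2 (mills_lower hs)

lemma phi_upper {s : ℝ} (hs : 0 < s) : phi s < 2*(s+2)/(s+3) :=
  (div_lt_iff₀ (pdf1_pos hs)).2 (mills_upper hs)

lemma phi_pos {s : ℝ} (hs : 0 < s) : 0 < phi s := by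
  have := phi_lower hs
  have h2 : (0:ℝ) < 2*s/(s+1) := by positivity
  linarith

lemma aphi_gt_one {s : ℝ} (hs : 0 < s) : 1 < (s+1)/(2*s) * phi s := by
  have h := phi_lower hs
  have h1 : (0:ℝ) < (s+1)/(2*s) := by positivity
  have h2 : (s+1)/(2*s) * (2*s/(s+1)) = 1 := by field_simp
  calc 1 = (s+1)/(2*s) * (2*s/(s+1)) := h2.symm
  _ < (s+1)/(2*s) * phi s := by exact mul_lt_mul_of_pos_left h h1

lemma psi_pos {s : ℝ} (hs : 0 < s) : 0 < psi s :=
  mul_pos (phi_pos hs) (by linarith [aphi_gt_one hs])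

lemma hasDerivAt_phi {s : ℝ} (hs : 0 < s) :
    HasDerivAt phi ((s+1)/(2*s) * phi s - 1) s := by
  have h := (hasDerivAt_surv hs).div (hasDerivAt_pdf1 hs) (pdf1_pos hs).ne'
  refine h.congr_deriv (Eq.symm ?_)
  have h0 : pdf1 s ≠ 0 := (pdf1_pos hs).ne'
  have hs0 : s ≠ 0 := hs.ne'
  unfold phi
  field_simp
  ring

lemma hasDerivAt_psi {s : ℝ} (hs : 0 < s) :
    HasDerivAt psi
      (((s+1)/(2*s) * phi s - 1) * (2*((s+1)/(2*s)) * phi s - 1) - (phi s)^2/(2*s^2)) s := by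
  have hs0 : s ≠ 0 := hs.ne'
  have ha : HasDerivAt (fun s : ℝ => (s+1)/(2*s)) (-1/(2*s^2)) s := by
    have := ((hasDerivAt_id s).add_const 1).div ((hasDerivAt_id s).const_mul 2)
      (by simpa using hs0)
    refine this.congr_deriv (Eq.symm ?_)
    simp only [id]
    field_simp; ring
  have h := (hasDerivAt_phi hs).mul ((ha.mul (hasDerivAt_phi hs)).sub_const 1)
  refine h.congr_deriv (Eq.symm ?_)
  simp only [Pi.mul_apply]
  ring

lemma psi_deriv_neg {s : ℝ} (hs : 0 < s) :
    ((s+1)/(2*s) * phi s - 1) * (2*((s+1)/(2*s)) * phi s - 1) - (phi s)^2/(2*s^2) < 0 := by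
  set p := phi s with hp
  have hlo : 2*s < p*(s+1) := by
    have := phi_lower hs
    rw [div_lt_iff₀ (by linarith)] at this
    linarith
  have hhi : p*(s+3) < 2*(s+2) := by
    have := phi_upper hs
    rw [lt_div_iff₀ (by linarith)] at this
    linarith
  have hQ : (s+2)*p^2 - 3*(s+1)*p + 2*s < 0 := by
    nlinarith [mul_pos (by linarith : (0:ℝ) < p*(s+1) - 2*s) (by linarith : (0:ℝ) < 2*(s+2) - p*(s+3)), sq_nonneg p, sq_nonneg (p-2), mul_pos hs hs]
  have key : ((s+1)/(2*s) * p - 1) * (2*((s+1)/(2*s)) * p - 1) - p^2/(2*s^2)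
      = ((s+2)*p^2 - 3*(s+1)*p + 2*s) / (2*s) := by
    field_simp
    ring
  rw [key]
  exact div_neg_of_neg_of_pos hQ (by positivity)

lemma psi_lt {s : ℝ} (hs : 0 < s) : psi s < 4/s^2 := by
  have h1 := phi_upper hs
  have h2 := phi_pos hs
  have h3 := aphi_gt_one hs
  have hub : (s+1)/(2*s) * phi s - 1 < 2/(s*(s+3)) := by
    have : (s+1)/(2*s) * phi s < (s+1)/(2*s) * (2*(s+2)/(s+3)) :=
      mul_lt_mul_of_pos_left h1 (by positivity)
    have he : (s+1)/(2*s) * (2*(s+2)/(s+3)) = 1 + 2/(s*(s+3)) := by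
      field_simp; ring
    linarith [he ▸ this]
  have hphi2 : phi s < 2 := by
    have : 2*(s+2)/(s+3) < 2 := by
      rw [div_lt_iff₀ (by linarith)]; linarith
    linarith
  calc psi s < 2 * (2/(s*(s+3))) := by
        unfold psi
        have hpos : 0 < (s+1)/(2*s) * phi s - 1 := by linarith
        nlinarith [mul_pos hs (by linarith : (0:ℝ) < s+3)]
    _ = 4/(s*(s+3)) := by ring
    _ ≤ 4/s^2 := by
        rw [div_le_div_iff₀ (by positivity) (by positivity)]
        nlinarith


lemma surv_pos {s : ℝ} (hs : 0 < s) : 0 < surv s := by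
  have h1 := mills_lower hs
  have h2 : (0:ℝ) < 2*s/(s+1) * pdf1 s := by
    have := pdf1_pos hs
    positivity
  linarith

lemma pdf1_nonneg' (t : ℝ) : 0 ≤ pdf1 t := by
  rcases le_or_gt t 0 with h | h
  · unfold pdf1
    rcases eq_or_lt_of_le h with h' | h'
    · simp [h', Real.zero_rpow (by norm_num : (-(1:ℝ)/2) ≠ 0)]
    · rw [Real.rpow_def_of_neg h']
      have : Real.cos (-(1:ℝ)/2 * π) = 0 := by
        rw [show (-(1:ℝ)/2 * π) = -(π/2) by ring, Real.cos_neg, Real.cos_pi_div_two]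
      simp [this]
  · exact (pdf1_pos h).le

lemma chi1CDF_mono {a b : ℝ} (ha : 0 ≤ a) (hab : a ≤ b) : chi1CDF a ≤ chi1CDF b := by
  rw [chi1CDF_eq, chi1CDF_eq,
    ← intervalIntegral.integral_add_adjacent_intervals (intervalIntegrable_pdf1 0 a)
      (intervalIntegrable_pdf1 a b)]
  have : 0 ≤ ∫ t in a..b, pdf1 t :=
    intervalIntegral.integral_nonneg hab (fun x _ => pdf1_nonneg' x)
  linarith

lemma chi1CDF_strictMono {a b : ℝ} (ha : 0 ≤ a) (hab : a < b) : chi1CDF a < chi1CDF b := by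
  rw [chi1CDF_eq, chi1CDF_eq,
    ← intervalIntegral.integral_add_adjacent_intervals (intervalIntegrable_pdf1 0 a)
      (intervalIntegrable_pdf1 a b)]
  have : 0 < ∫ t in a..b, pdf1 t := by
    apply intervalIntegral_pos_of_pos_on (intervalIntegrable_pdf1 a b) _ hab
    intro x hx
    exact pdf1_pos (lt_of_le_of_lt ha hx.1)
  linarith

lemma surv_antitone {a b : ℝ} (ha : 0 < a) (hab : a ≤ b) : surv b ≤ surv a := by
  have h1 := chi1CDF_add_surv ha.le
  have h2 := chi1CDF_add_surv (le_trans ha.le hab)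
  have := chi1CDF_mono ha.le hab
  linarith

/-- With `H̃ = F⁻¹ ∘ G` (`F` the χ²₁ CDF, `G` standard exponential CDF), the second
derivative `H̃''` is positive and (strictly) decreasing on `(0,∞)`, and `H̃''(v) → 0`
as `v → ∞`. -/
theorem tildeH_second_deriv_properties (H : ℝ → ℝ)
    (hH : ∀ v ∈ Set.Ioi (0:ℝ), 0 < H v ∧ chi1CDF (H v) = 1 - Real.exp (-v)) :
    (∀ v ∈ Set.Ioi (0:ℝ), 0 < deriv (deriv H) v) ∧
    StrictAntiOn (deriv (deriv H)) (Set.Ioi 0) ∧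
    Tendsto (deriv (deriv H)) atTop (nhds 0) := by
  have hpos : ∀ v ∈ Set.Ioi (0:ℝ), 0 < H v := fun v hv => (hH v hv).1
  have hcdf : ∀ v ∈ Set.Ioi (0:ℝ), chi1CDF (H v) = 1 - Real.exp (-v) :=
    fun v hv => (hH v hv).2
  have hsurvH : ∀ v ∈ Set.Ioi (0:ℝ), surv (H v) = Real.exp (-v) := by
    intro v hv
    have := chi1CDF_add_surv (hpos v hv).le
    rw [hcdf v hv] at this
    linarith
  -- strict monotonicity of H
  have hHmono : StrictMonoOn H (Set.Ioi 0) := by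
    intro v1 h1 v2 h2 h12
    by_contra hle
    push_neg at hle
    have := chi1CDF_mono (hpos v2 h2).le hle
    rw [hcdf v1 h1, hcdf v2 h2] at this
    have := Real.exp_lt_exp.2 (neg_lt_neg h12)
    linarith
  -- continuity of H on Ioi 0
  have hHcont : ∀ v ∈ Set.Ioi (0:ℝ), ContinuousAt H v := by
    intro v hv
    rw [mem_Ioi] at hv
    rw [ContinuousAt]
    apply tendsto_order.2
    constructor
    · intro b hb
      rcases le_or_gt b 0 with hb0 | hb0
      · filter_upwards [Ioi_mem_nhds hv] with y hy
        exact lt_of_le_of_lt hb0 (hpos y hy)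
      · have hlt : chi1CDF b < 1 - Real.exp (-v) := by
          rw [← hcdf v (mem_Ioi.2 hv)]
          exact chi1CDF_strictMono hb0.le hb
        have hcont : ContinuousAt (fun y : ℝ => 1 - Real.exp (-y)) v := by fun_prop
        filter_upwards [hcont.eventually (eventually_gt_nhds hlt), Ioi_mem_nhds hv] with y hy1 hy2
        by_contra hc
        push_neg at hc
        have := chi1CDF_mono (hpos y hy2).le hc
        rw [hcdf y hy2] at this
        linarith
    · intro b hb
      have hbpos : 0 < b := lt_trans (hpos v (mem_Ioi.2 hv)) hb
      have hlt : 1 - Real.exp (-v) < chi1CDF b := by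
        rw [← hcdf v (mem_Ioi.2 hv)]
        exact chi1CDF_strictMono (hpos v (mem_Ioi.2 hv)).le hb
      have hcont : ContinuousAt (fun y : ℝ => 1 - Real.exp (-y)) v := by fun_prop
      filter_upwards [hcont.eventually (eventually_lt_nhds hlt), Ioi_mem_nhds hv] with y hy1 hy2
      by_contra hc
      push_neg at hc
      have := chi1CDF_mono hbpos.le hc
      rw [hcdf y hy2] at this
      linarith
  -- derivative of H
  have hHderiv : ∀ v ∈ Set.Ioi (0:ℝ), HasDerivAt H (phi (H v)) v := by
    intro v hv
    have hv0 := mem_Ioi.1 hv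
    have hs0 := hpos v hv
    have hse : surv (H v) = Real.exp (-v) := hsurvH v hv
    have hsne : (1:ℝ) - chi1CDF (H v) ≠ 0 := by
      rw [hcdf v hv]
      intro h
      have := Real.exp_pos (-v)
      linarith
    have hJ : HasDerivAt (fun s => -Real.log (1 - chi1CDF s)) (pdf1 (H v) / surv (H v)) (H v) := by
      have hu : HasDerivAt (fun s => 1 - chi1CDF s) (-pdf1 (H v)) (H v) := by
        simpa using (hasDerivAt_chi1CDF hs0).const_sub 1
      have := (hu.log hsne).neg
      refine this.congr_deriv (Eq.symm ?_)
      have : (1:ℝ) - chi1CDF (H v) = surv (H v) := by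
        have := chi1CDF_add_surv hs0.le; linarith
      rw [this]
      field_simp
    have hfg : ∀ᶠ y in nhds v, (fun s => -Real.log (1 - chi1CDF s)) (H y) = y := by
      filter_upwards [Ioi_mem_nhds hv0] with y hy
      show -Real.log (1 - chi1CDF (H y)) = y
      rw [hcdf y hy]
      rw [show (1:ℝ) - (1 - Real.exp (-y)) = Real.exp (-y) by ring, Real.log_exp]
      ring
    have hne : pdf1 (H v) / surv (H v) ≠ 0 :=
      ne_of_gt (div_pos (pdf1_pos hs0) (surv_pos hs0))
    have := HasDerivAt.of_local_left_inverse (hHcont v hv) hJ hne hfg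
    refine this.congr_deriv (Eq.symm ?_)
    rw [inv_div]
    rfl
  -- deriv H = phi ∘ H on Ioi 0
  have hderivH_eq : ∀ v ∈ Set.Ioi (0:ℝ), deriv H v = phi (H v) :=
    fun v hv => (hHderiv v hv).deriv
  -- second derivative
  have hH2deriv : ∀ v ∈ Set.Ioi (0:ℝ), HasDerivAt (deriv H) (psi (H v)) v := by
    intro v hv
    have hs0 := hpos v hv
    have hcomp : HasDerivAt (fun y => phi (H y)) (psi (H v)) v := by
      have := (hasDerivAt_phi hs0).comp v (hHderiv v hv)
      refine this.congr_deriv (Eq.symm ?_)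
      unfold psi
      ring
    apply hcomp.congr_of_eventuallyEq
    filter_upwards [Ioi_mem_nhds (mem_Ioi.1 hv)] with y hy
    exact hderivH_eq y hy
  have hderiv2_eq : ∀ v ∈ Set.Ioi (0:ℝ), deriv (deriv H) v = psi (H v) :=
    fun v hv => (hH2deriv v hv).deriv
  -- psi strict anti
  have hpsiAnti : StrictAntiOn psi (Set.Ioi 0) := by
    apply strictAntiOn_of_deriv_neg (convex_Ioi 0)
    · exact fun s hs => ((hasDerivAt_psi (mem_Ioi.1 hs)).continuousAt).continuousWithinAt
    · rw [interior_Ioi]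
      intro x hx
      rw [(hasDerivAt_psi (mem_Ioi.1 hx)).deriv]
      exact psi_deriv_neg (mem_Ioi.1 hx)
  -- H tends to infinity
  have hHtop : Tendsto H atTop atTop := by
    rw [tendsto_atTop]
    intro C
    have hC' : (0:ℝ) < max C 1 := lt_of_lt_of_le one_pos (le_max_right _ _)
    have hsC : 0 < surv (max C 1) := surv_pos hC'
    filter_upwards [eventually_gt_atTop (max (-Real.log (surv (max C 1))) 0)] with v hv
    have hv0 : 0 < v := lt_of_le_of_lt (le_max_right _ _) hv
    have h1 : Real.exp (-v) < surv (max C 1) := by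
      rw [← Real.exp_log hsC]
      apply Real.exp_lt_exp.2
      have := lt_of_le_of_lt (le_max_left (-Real.log (surv (max C 1))) 0) hv
      linarith
    have h2 : surv (H v) < surv (max C 1) := by
      rw [hsurvH v (mem_Ioi.2 hv0)]; exact h1
    by_contra hlt
    push_neg at hlt
    have h3 : H v ≤ max C 1 := le_trans hlt.le (le_max_left _ _)
    have := surv_antitone (hpos v (mem_Ioi.2 hv0)) h3
    linarith
  refine ⟨?_, ?_, ?_⟩
  · intro v hv
    rw [hderiv2_eq v hv]
    exact psi_pos (hpos v hv)
  · intro v1 h1 v2 h2 h12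
    rw [hderiv2_eq v1 h1, hderiv2_eq v2 h2]
    exact hpsiAnti (mem_Ioi.2 (hpos v1 h1)) (mem_Ioi.2 (hpos v2 h2)) (hHmono h1 h2 h12)
  · have hev : ∀ᶠ v in atTop, deriv (deriv H) v = psi (H v) := by
      filter_upwards [eventually_gt_atTop 0] with v hv
      exact hderiv2_eq v (mem_Ioi.2 hv)
    apply Tendsto.congr' (hev.mono fun v hv => hv.symm)
    apply squeeze_zero'
    · filter_upwards [hHtop.eventually (eventually_gt_atTop 0)] with v hv
      exact (psi_pos hv).le
    · filter_upwards [hHtop.eventually (eventually_gt_atTop 0)] with v hv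
      exact (psi_lt hv).le
    · have h4 : Tendsto (fun s : ℝ => 4/s^2) atTop (nhds 0) := by
        apply Tendsto.div_atTop (tendsto_const_nhds)
        exact (tendsto_pow_atTop (by norm_num)).comp tendsto_id |>.congr (fun x => rfl)
      exact h4.comp hHtop
end

section
/- With $\tilde H=F^{-1}\circ G$ where $F$ is the $\chi^2_1$ CDF and $G$ the standard exponential CDF, the product $\tilde H(v)\tilde H''(v)\to 0$ as $v\to\infty$. -/
open Filter Real Set

open MeasureTheory intervalIntegral

noncomputable def q2 (p t : ℝ) : ℝ := t ^ p * Real.exp (-t/2)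

noncomputable def J (p y : ℝ) : ℝ := ∫ t in Set.Ioi y, q2 p t

lemma q2_nonneg (p : ℝ) {t : ℝ} (ht : 0 ≤ t) : 0 ≤ q2 p t :=
  mul_nonneg (Real.rpow_nonneg ht p) (Real.exp_pos _).le

lemma q2_meas (p : ℝ) : Measurable (q2 p) :=
  (measurable_id.pow_const p).mul (Real.continuous_exp.comp (continuous_id.neg.div_const 2)).measurable

lemma q2_contAt (p : ℝ) {t : ℝ} (ht : 0 < t) : ContinuousAt (q2 p) t := by
  exact ((Real.continuousAt_rpow_const t p (Or.inl ht.ne')).mul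
    ((Real.continuous_exp.comp (continuous_id.neg.div_const 2)).continuousAt))

lemma q2_int {p a : ℝ} (hp : p ≤ 0) (ha : 0 < a) : IntegrableOn (q2 p) (Set.Ioi a) := by
  have hint : IntegrableOn (fun t => a ^ p * Real.exp (-(1/2) * t)) (Set.Ioi a) :=
    (exp_neg_integrableOn_Ioi a one_half_pos).const_mul _
  refine Integrable.mono' hint ((q2_meas p).aestronglyMeasurable.restrict) ?_
  rw [ae_restrict_iff' measurableSet_Ioi]
  refine ae_of_all _ fun t ht => ?_
  have ht0 : 0 < t := lt_trans ha ht
  rw [Real.norm_eq_abs, abs_of_nonneg (q2_nonneg p ht0.le)]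
  have : t ^ p ≤ a ^ p := Real.rpow_le_rpow_of_nonpos ha (le_of_lt ht) hp
  calc q2 p t ≤ a ^ p * Real.exp (-t/2) :=
        mul_le_mul_of_nonneg_right this (Real.exp_pos _).le
    _ = a ^ p * Real.exp (-(1/2) * t) := by ring_nf

lemma q2_int0 : IntegrableOn (q2 (-(1:ℝ)/2)) (Set.Ioi 0) := by
  rw [← Set.Ioc_union_Ioi_eq_Ioi (zero_le_one (α := ℝ))]
  refine IntegrableOn.union ?_ (q2_int (by norm_num) one_pos)
  have hrpow : IntegrableOn (fun t : ℝ => t ^ (-(1:ℝ)/2)) (Set.Ioc 0 1) := by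
    have := (intervalIntegrable_rpow' (a := 0) (b := 1) (r := -(1:ℝ)/2) (by norm_num))
    exact (intervalIntegrable_iff_integrableOn_Ioc_of_le zero_le_one).1 this
  refine Integrable.mono' hrpow ((q2_meas _).aestronglyMeasurable.restrict) ?_
  rw [ae_restrict_iff' measurableSet_Ioc]
  refine ae_of_all _ fun t ht => ?_
  rw [Real.norm_eq_abs, abs_of_nonneg (q2_nonneg _ ht.1.le)]
  have : Real.exp (-t/2) ≤ 1 := by
    rw [Real.exp_le_one_iff]; linarith [ht.1]
  calc q2 (-(1:ℝ)/2) t ≤ t ^ (-(1:ℝ)/2) * 1 :=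
        mul_le_mul_of_nonneg_left this (Real.rpow_nonneg ht.1.le _)
    _ = t ^ (-(1:ℝ)/2) := mul_one _

lemma J_nonneg (p : ℝ) {y : ℝ} (hy : 0 < y) : 0 ≤ J p y :=
  setIntegral_nonneg measurableSet_Ioi fun t ht => q2_nonneg p (le_of_lt (lt_trans hy ht))

lemma J_split {p a b : ℝ} (hp : p ≤ 0) (ha : 0 < a) (hab : a ≤ b) :
    J p a = (∫ t in Set.Ioc a b, q2 p t) + J p b := by
  rw [J, ← Set.Ioc_union_Ioi_eq_Ioi hab,
    setIntegral_union (Set.Ioc_disjoint_Ioi le_rfl) measurableSet_Ioi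
      ((q2_int hp ha).mono_set Set.Ioc_subset_Ioi_self)
      ((q2_int hp ha).mono_set (Set.Ioi_subset_Ioi hab))]
  rfl

lemma J_ii {p y : ℝ} (hp : p ≤ 0) (hy : 0 < y) :
    ∫ t in (1:ℝ)..y, q2 p t = J p 1 - J p y := by
  rcases le_total 1 y with h | h
  · rw [intervalIntegral.integral_of_le h]
    have := J_split hp one_pos h
    linarith [this]
  · rw [intervalIntegral.integral_symm, intervalIntegral.integral_of_le h]
    have := J_split hp hy h
    linarith [this]

lemma J_hasDeriv {p y : ℝ} (hp : p ≤ 0) (hy : 0 < y) :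
    HasDerivAt (J p) (-(q2 p y)) y := by
  have hii : IntervalIntegrable (q2 p) volume 1 y := by
    have : IntegrableOn (q2 p) (Set.Ioi (min 1 y / 2)) :=
      q2_int hp (by positivity)
    exact (this.mono_set (fun t ht => by
      simp only [Set.mem_uIcc] at ht
      simp only [Set.mem_Ioi]
      rcases ht with ⟨h1, _⟩ | ⟨h1, _⟩
      · calc min 1 y / 2 < min 1 y := by
              have : (0:ℝ) < min 1 y := lt_min one_pos hy
              linarith
          _ ≤ 1 := min_le_left _ _
          _ ≤ t := h1
      · calc min 1 y / 2 < min 1 y := by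
              have : (0:ℝ) < min 1 y := lt_min one_pos hy
              linarith
          _ ≤ y := min_le_right _ _
          _ ≤ t := h1)).intervalIntegrable
  have hFTC : HasDerivAt (fun u => ∫ t in (1:ℝ)..u, q2 p t) (q2 p y) y :=
    intervalIntegral.integral_hasDerivAt_right hii
      ⟨Set.univ, Filter.univ_mem, ((q2_meas p).aestronglyMeasurable.restrict)⟩
      (q2_contAt p hy)
  have heq : (fun u => J p 1 - ∫ t in (1:ℝ)..u, q2 p t) =ᶠ[nhds y] J p := by
    filter_upwards [IsOpen.mem_nhds isOpen_Ioi hy] with u hu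
    rw [J_ii hp hu]; ring
  have := (hFTC.const_sub (J p 1)).congr_of_eventuallyEq heq.symm
  convert this using 1

lemma J_tendsto {p : ℝ} (hp : p ≤ 0) : Tendsto (J p) atTop (nhds 0) := by
  have h1 : Tendsto (fun y => ∫ t in (1:ℝ)..y, q2 p t) atTop (nhds (J p 1)) :=
    intervalIntegral_tendsto_integral_Ioi 1 (q2_int hp one_pos) tendsto_id
  have h2 : Tendsto (fun y => J p 1 - ∫ t in (1:ℝ)..y, q2 p t) atTop (nhds (J p 1 - J p 1)) :=
    tendsto_const_nhds.sub h1
  rw [sub_self] at h2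
  refine h2.congr' ?_
  filter_upwards [eventually_gt_atTop 0] with y hy
  rw [J_ii hp hy]; ring

lemma eq_zero_on_Ioi {φ : ℝ → ℝ} (hd : ∀ y ∈ Set.Ioi (0:ℝ), HasDerivAt φ 0 y)
    (hl : Tendsto φ atTop (nhds 0)) {y : ℝ} (hy : 0 < y) : φ y = 0 := by
  have key : ∀ z, y ≤ z → φ z = φ y := by
    intro z hz
    have hcont : ContinuousOn φ (Set.Icc y z) := fun x hx =>
      (hd x (lt_of_lt_of_le hy hx.1)).continuousAt.continuousWithinAt
    have hder : ∀ x ∈ Set.Ico y z, HasDerivWithinAt φ 0 (Set.Ici x) x := fun x hx =>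
      (hd x (lt_of_lt_of_le hy hx.1)).hasDerivWithinAt
    exact constant_of_has_deriv_right_zero hcont hder z ⟨hz, le_rfl⟩
  have : Tendsto φ atTop (nhds (φ y)) := by
    refine tendsto_const_nhds.congr' ?_
    filter_upwards [eventually_ge_atTop y] with z hz
    exact (key z hz).symm
  exact tendsto_nhds_unique this hl

lemma rpow_exp_tendsto {p : ℝ} (hp : p ≤ 0) :
    Tendsto (fun y : ℝ => y ^ p * Real.exp (-y/2)) atTop (nhds 0) := by
  have hexp : Tendsto (fun y : ℝ => Real.exp (-y/2)) atTop (nhds 0) := by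
    apply Real.tendsto_exp_atBot.comp
    apply Filter.Tendsto.atBot_div_const two_pos
    exact tendsto_neg_atBot_iff.mpr tendsto_id
  refine squeeze_zero' ?_ ?_ hexp
  · filter_upwards [eventually_gt_atTop 0] with y hy
    exact mul_nonneg (Real.rpow_nonneg hy.le _) (Real.exp_pos _).le
  · filter_upwards [eventually_ge_atTop 1] with y hy
    calc y ^ p * Real.exp (-y/2) ≤ 1 * Real.exp (-y/2) :=
          mul_le_mul_of_nonneg_right (Real.rpow_le_one_of_one_le_of_nonpos hy hp) (Real.exp_pos _).le
      _ = Real.exp (-y/2) := one_mul _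

lemma hasDerivAt_rpow_exp {p y : ℝ} (hy : 0 < y) :
    HasDerivAt (fun y : ℝ => y ^ p * Real.exp (-y/2))
      (p * y ^ (p-1) * Real.exp (-y/2) - y ^ p * Real.exp (-y/2) / 2) y := by
  have h1 : HasDerivAt (fun y : ℝ => y ^ p) (p * y ^ (p-1)) y :=
    Real.hasDerivAt_rpow_const (Or.inl hy.ne')
  have h2 : HasDerivAt (fun y : ℝ => Real.exp (-y/2)) (Real.exp (-y/2) * (-1/2)) y := by
    have : HasDerivAt (fun y : ℝ => -y/2) (-1/2) y := by
      simpa using ((hasDerivAt_id y).neg.div_const 2)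
    exact (Real.hasDerivAt_exp _).comp y this
  have := h1.mul h2
  refine this.congr_deriv (Eq.symm ?_)
  ring

lemma J_eq {p y : ℝ} (hp : p ≤ 0) (hy : 0 < y) :
    J p y = 2 * y ^ p * Real.exp (-y/2) + 2 * p * J (p-1) y := by
  set φ : ℝ → ℝ := fun y => J p y - 2 * y ^ p * Real.exp (-y/2) - 2 * p * J (p-1) y with hφ
  have h0 : φ y = 0 := by
    refine eq_zero_on_Ioi ?_ ?_ hy
    · intro z hz
      have hz0 : (0:ℝ) < z := hz
      have h1 := J_hasDeriv hp hz0
      have h2 := J_hasDeriv (p := p - 1) (by linarith) hz0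
      have h3 := hasDerivAt_rpow_exp (p := p) hz0
      have hfun : φ = fun x => J p x - 2 * (x ^ p * Real.exp (-x/2)) - 2 * p * J (p-1) x := by
        funext x; rw [hφ]; ring
      rw [hfun]
      have goal : HasDerivAt (fun x => J p x - 2 * (x ^ p * Real.exp (-x/2)) - 2 * p * J (p-1) x) ((-(q2 p z) - 2 * (p * z ^ (p-1) * Real.exp (-z/2) - z ^ p * Real.exp (-z/2) / 2)) - 2 * p * (-(q2 (p-1) z))) z :=
        (h1.sub ((h3.const_mul 2))).sub (h2.const_mul (2*p))
      have hval : (-(q2 p z) - 2 * (p * z ^ (p-1) * Real.exp (-z/2) - z ^ p * Real.exp (-z/2) / 2)) - 2 * p * (-(q2 (p-1) z)) = 0 := by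
        simp only [q2]
        have hzp : z ^ (p - 1) = z ^ p / z := by
          rw [Real.rpow_sub hz0, Real.rpow_one]
        rw [hzp]
        field_simp
        ring
      rw [← hval]
      exact goal
    · have h := ((J_tendsto hp).sub ((rpow_exp_tendsto hp).const_mul 2)).sub
        ((J_tendsto (p := p-1) (by linarith)).const_mul (2*p))
      have h2 : Tendsto φ atTop (nhds ((0 - 2*0) - 2*p*0)) :=
        Tendsto.congr (fun x => by rw [hφ]; ring) h
      simpa using h2
  have := h0
  rw [hφ] at this
  linarith [this]

lemma J_mul_le {p r y : ℝ} (hp : p ≤ 0) (hr : r ≤ 0) (hy : 0 < y) :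
    J (p + r) y ≤ y ^ r * J p y := by
  rw [J, J, ← MeasureTheory.integral_const_mul]
  refine setIntegral_mono_on ?_ ?_ measurableSet_Ioi ?_
  · exact q2_int (by linarith) hy
  · exact (q2_int hp hy).const_mul _
  · intro t ht
    have ht0 : 0 < t := lt_trans hy ht
    simp only [q2]
    rw [Real.rpow_add ht0]
    have h1 : t ^ r ≤ y ^ r := Real.rpow_le_rpow_of_nonpos hy (le_of_lt ht) hr
    calc t ^ p * t ^ r * Real.exp (-t/2) ≤ t ^ p * y ^ r * Real.exp (-t/2) := by
          apply mul_le_mul_of_nonneg_right _ (Real.exp_pos _).le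
          exact mul_le_mul_of_nonneg_left h1 (Real.rpow_nonneg ht0.le _)
      _ = y ^ r * (t ^ p * Real.exp (-t/2)) := by ring

lemma J_zero {y : ℝ} (hy : 0 < y) : J 0 y = 2 * Real.exp (-y/2) := by
  have := J_eq (p := 0) le_rfl hy
  simpa using this

lemma J_half_pos {y : ℝ} (hy : 0 < y) : 0 < J (-(1:ℝ)/2) y := by
  have heq := J_eq (p := -(1:ℝ)/2) (by norm_num) hy
  have hE : (-(1:ℝ)/2 - 1) = (-(1:ℝ)/2 + -(1:ℝ)) := by norm_num
  rw [hE] at heq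
  have hle : J (-(1:ℝ)/2 + -(1:ℝ)) y ≤ y ^ (-(1:ℝ)) * J (-(1:ℝ)/2) y :=
    J_mul_le (by norm_num) (by norm_num) hy
  have h1 : 0 ≤ J (-(1:ℝ)/2) y := J_nonneg _ hy
  have h2 : 0 < y ^ (-(1:ℝ)/2) * Real.exp (-y/2) :=
    mul_pos (Real.rpow_pos_of_pos hy _) (Real.exp_pos _)
  have h3 : 0 < y ^ (-(1:ℝ)) := Real.rpow_pos_of_pos hy _
  nlinarith [heq, hle, h1, h2, h3]

lemma sqrt_two_pi_pos : 0 < Real.sqrt (2 * π) := Real.sqrt_pos.2 (by positivity)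

lemma total_integral : ∫ t in Set.Ioi (0:ℝ), q2 (-(1:ℝ)/2) t = Real.sqrt (2 * π) := by
  have hsub := MeasureTheory.integral_comp_mul_left_Ioi (q2 (-(1:ℝ)/2)) 0 two_pos
  rw [mul_zero] at hsub
  have hgamma : Real.Gamma (1/2) = ∫ x in Set.Ioi (0:ℝ), Real.exp (-x) * x ^ ((1:ℝ)/2 - 1) :=
    Real.Gamma_eq_integral one_half_pos
  have heq : ∫ x in Set.Ioi (0:ℝ), q2 (-(1:ℝ)/2) (2 * x)
      = ∫ x in Set.Ioi (0:ℝ), (2:ℝ) ^ (-(1:ℝ)/2) * (Real.exp (-x) * x ^ ((1:ℝ)/2 - 1)) := by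
    refine setIntegral_congr_fun measurableSet_Ioi fun x hx => ?_
    have hx0 : (0:ℝ) < x := hx
    simp only [q2]
    rw [Real.mul_rpow (by norm_num) hx0.le]
    have h2 : (2:ℝ) * x / 2 = x := by ring
    have h3 : ((1:ℝ)/2 - 1) = -(1:ℝ)/2 := by norm_num
    rw [h3]
    rw [show -(2*x)/2 = -x by ring]
    ring
  rw [heq, MeasureTheory.integral_const_mul, ← hgamma, Real.Gamma_one_half_eq] at hsub
  have h2half : (2:ℝ) ^ (-(1:ℝ)/2) = (Real.sqrt 2)⁻¹ := by
    rw [show (-(1:ℝ)/2) = -(1/2 : ℝ) by norm_num, Real.rpow_neg (by norm_num),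
      ← Real.sqrt_eq_rpow]
  rw [h2half] at hsub
  have hs2 : Real.sqrt 2 > 0 := Real.sqrt_pos.2 two_pos
  rw [smul_eq_mul] at hsub
  have hI : ∫ t in Set.Ioi (0:ℝ), q2 (-(1:ℝ)/2) t = 2 * ((Real.sqrt 2)⁻¹ * Real.sqrt π) := by
    linarith [hsub]
  rw [hI, Real.sqrt_mul (by norm_num : (0:ℝ) ≤ 2) π]
  have h22 : Real.sqrt 2 * Real.sqrt 2 = 2 := Real.mul_self_sqrt (by norm_num)
  calc 2 * ((Real.sqrt 2)⁻¹ * Real.sqrt π)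
      = (Real.sqrt 2 * Real.sqrt 2) * ((Real.sqrt 2)⁻¹ * Real.sqrt π) := by rw [h22]
    _ = Real.sqrt 2 * Real.sqrt π := by
        field_simp

lemma chi1CDF_repr (y : ℝ) :
    chi1CDF y = (∫ t in (0:ℝ)..y, q2 (-(1:ℝ)/2) t) / Real.sqrt (2 * π) := by
  rw [chi1CDF, ← intervalIntegral.integral_div]
  rfl

lemma chi1CDF_tail {y : ℝ} (hy : 0 < y) :
    Real.sqrt (2 * π) * (1 - chi1CDF y) = J (-(1:ℝ)/2) y := by
  have hdecomp : (∫ t in Set.Ioc (0:ℝ) y, q2 (-(1:ℝ)/2) t) + J (-(1:ℝ)/2) y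
      = Real.sqrt (2 * π) := by
    rw [← total_integral, J, ← MeasureTheory.setIntegral_union
      (Set.Ioc_disjoint_Ioi le_rfl) measurableSet_Ioi
      (q2_int0.mono_set Set.Ioc_subset_Ioi_self)
      (q2_int0.mono_set (Set.Ioi_subset_Ioi hy.le)),
      Set.Ioc_union_Ioi_eq_Ioi hy.le]
  rw [chi1CDF_repr, intervalIntegral.integral_of_le hy.le, mul_sub, mul_one,
    mul_div_cancel₀ _ (ne_of_gt sqrt_two_pi_pos)]
  linarith [hdecomp]

lemma q2_ii {a b : ℝ} (ha : 0 ≤ a) (hab : a ≤ b) :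
    IntervalIntegrable (q2 (-(1:ℝ)/2)) volume a b := by
  rw [intervalIntegrable_iff_integrableOn_Ioc_of_le hab]
  exact q2_int0.mono_set fun t ht => lt_of_le_of_lt ha ht.1

lemma chi1CDF_strict {a b : ℝ} (ha : 0 < a) (hab : a < b) : chi1CDF a < chi1CDF b := by
  have hadd : (∫ t in (0:ℝ)..a, q2 (-(1:ℝ)/2) t) + (∫ t in a..b, q2 (-(1:ℝ)/2) t)
      = ∫ t in (0:ℝ)..b, q2 (-(1:ℝ)/2) t :=
    intervalIntegral.integral_add_adjacent_intervals (q2_ii le_rfl ha.le)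
      (q2_ii ha.le hab.le)
  have hpos : 0 < ∫ t in a..b, q2 (-(1:ℝ)/2) t := by
    refine intervalIntegral_pos_of_pos_on (q2_ii ha.le hab.le) ?_ hab
    intro t ht
    have ht0 : 0 < t := lt_trans ha ht.1
    exact mul_pos (Real.rpow_pos_of_pos ht0 _) (Real.exp_pos _)
  rw [chi1CDF_repr, chi1CDF_repr, div_lt_div_iff_of_pos_right sqrt_two_pi_pos]
  linarith [hadd, hpos]

lemma chi1CDF_lt_one {y : ℝ} (hy : 0 < y) : chi1CDF y < 1 := by
  have := chi1CDF_tail hy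
  have h1 := J_half_pos hy
  nlinarith [sqrt_two_pi_pos]

noncomputable def Rfun (y : ℝ) : ℝ := Real.sqrt y * Real.exp (y/2) * J (-(1:ℝ)/2) y

lemma rpow_n12 {y : ℝ} (hy : 0 < y) : y ^ (-(1:ℝ)/2) = (Real.sqrt y)⁻¹ := by
  rw [show (-(1:ℝ)/2) = -(1/2:ℝ) by norm_num, Real.rpow_neg hy.le, ← Real.sqrt_eq_rpow]

lemma rpow_n32 {y : ℝ} (hy : 0 < y) : y ^ (-(3:ℝ)/2) = (y * Real.sqrt y)⁻¹ := by
  rw [show (-(3:ℝ)/2) = -(3/2:ℝ) by norm_num, Real.rpow_neg hy.le,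
    show (3/2:ℝ) = 1 + 1/2 by norm_num, Real.rpow_add hy, Real.rpow_one, ← Real.sqrt_eq_rpow]

lemma rpow_n52 {y : ℝ} (hy : 0 < y) : y ^ (-(5:ℝ)/2) = (y * y * Real.sqrt y)⁻¹ := by
  rw [show (-(5:ℝ)/2) = -(5/2:ℝ) by norm_num, Real.rpow_neg hy.le,
    show (5/2:ℝ) = 1 + 1 + 1/2 by norm_num, Real.rpow_add hy, Real.rpow_add hy,
    Real.rpow_one, ← Real.sqrt_eq_rpow]

lemma Rfun_hasDeriv {y : ℝ} (hy : 0 < y) :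
    HasDerivAt Rfun (Rfun y * (1/(2*y) + 1/2) - 1) y := by
  have hs : HasDerivAt Real.sqrt (1/(2*Real.sqrt y)) y := Real.hasDerivAt_sqrt hy.ne'
  have hid : HasDerivAt (fun y : ℝ => y/2) (1/2) y := by
    simpa using (hasDerivAt_id y).div_const 2
  have he : HasDerivAt (fun y : ℝ => Real.exp (y/2)) (Real.exp (y/2) * (1/2)) y :=
    (Real.hasDerivAt_exp _).comp y hid
  have hJ := J_hasDeriv (p := -(1:ℝ)/2) (by norm_num) hy
  have hmul := (hs.mul he).mul hJ
  have hfun : Rfun = fun y => Real.sqrt y * Real.exp (y/2) * J (-(1:ℝ)/2) y := rfl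
  rw [hfun]
  refine hmul.congr_deriv (Eq.symm ?_)
  simp only [q2, Rfun, Pi.mul_apply]
  rw [rpow_n12 hy]
  have ha : Real.sqrt y ≠ 0 := (Real.sqrt_pos.2 hy).ne'
  have hE' : Real.exp (-y/2) = (Real.exp (y/2))⁻¹ := by
    rw [show -y/2 = -(y/2) by ring, Real.exp_neg]
  rw [hE']
  have hyaa : y = Real.sqrt y * Real.sqrt y := (Real.mul_self_sqrt hy.le).symm
  have hEne : Real.exp (y/2) ≠ 0 := (Real.exp_pos _).ne'
  have haa : Real.sqrt y * Real.sqrt y = y := Real.mul_self_sqrt hy.le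
  field_simp
  linear_combination (Real.exp (y/2) * J (-(1/2:ℝ)) y) * haa


section H
variable {H : ℝ → ℝ}
  (hH : ∀ v ∈ Set.Ioi (0:ℝ), 0 < H v ∧ chi1CDF (H v) = 1 - Real.exp (-v))

include hH

lemma H_top : Tendsto H atTop atTop := by
  rw [tendsto_atTop]
  intro M
  set M' := max M 1 with hM'def
  have hM' : (0:ℝ) < M' := lt_of_lt_of_le one_pos (le_max_right _ _)
  have hFM : chi1CDF M' < 1 := chi1CDF_lt_one hM'
  have hexp : Tendsto (fun v : ℝ => Real.exp (-v)) atTop (nhds 0) := by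
    apply Real.tendsto_exp_atBot.comp
    exact tendsto_neg_atBot_iff.mpr tendsto_id
  have hev : ∀ᶠ v in atTop, Real.exp (-v) < 1 - chi1CDF M' :=
    hexp.eventually_lt_const (by linarith)
  filter_upwards [hev, eventually_gt_atTop 0] with v hv hv0
  have h := hH v hv0
  have hM'le : M' ≤ H v := by
    by_contra hc
    push_neg at hc
    have := chi1CDF_mono (h.1.le) hc.le
    rw [h.2] at this
    linarith
  exact le_trans (le_max_left M 1) hM'le

lemma H_cont {v : ℝ} (hv : 0 < v) : ContinuousAt H v := by
  rw [ContinuousAt, Metric.tendsto_nhds]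
  intro ε hε
  obtain ⟨hy0, hFy⟩ := hH v hv
  set y₀ := H v
  set ε' := min (ε/2) (y₀/2) with hε'def
  have hε' : 0 < ε' := lt_min (by linarith) (by linarith)
  have hε'y : ε' ≤ y₀/2 := min_le_right _ _
  have hε'ε : ε' < ε := lt_of_le_of_lt (min_le_left _ _) (by linarith)
  have hlow : chi1CDF (y₀ - ε') < chi1CDF y₀ := chi1CDF_strict (by linarith) (by linarith)
  have hhigh : chi1CDF y₀ < chi1CDF (y₀ + ε') := chi1CDF_strict hy0 (by linarith)
  have hcont : Continuous (fun w : ℝ => 1 - Real.exp (-w)) :=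
    continuous_const.sub (Real.continuous_exp.comp continuous_neg)
  have hopen : IsOpen ((fun w : ℝ => 1 - Real.exp (-w)) ⁻¹'
      (Set.Ioo (chi1CDF (y₀ - ε')) (chi1CDF (y₀ + ε'))) ∩ Set.Ioi 0) :=
    (isOpen_Ioo.preimage hcont).inter isOpen_Ioi
  have hmem : v ∈ (fun w : ℝ => 1 - Real.exp (-w)) ⁻¹'
      (Set.Ioo (chi1CDF (y₀ - ε')) (chi1CDF (y₀ + ε'))) ∩ Set.Ioi 0 := by
    refine ⟨?_, hv⟩
    simp only [Set.mem_preimage, Set.mem_Ioo, ← hFy]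
    exact ⟨hlow, hhigh⟩
  filter_upwards [hopen.mem_nhds hmem] with w hw
  obtain ⟨⟨ha, hb⟩, hw0⟩ := hw
  obtain ⟨hw1, hw2⟩ := hH w hw0
  simp only at ha hb
  rw [← hw2] at ha hb
  have h1 : y₀ - ε' < H w := by
    by_contra hc
    push_neg at hc
    exact absurd (chi1CDF_mono hw1.le hc) (not_le.2 ha)
  have h2 : H w < y₀ + ε' := by
    by_contra hc
    push_neg at hc
    exact absurd (chi1CDF_mono (by linarith) hc) (not_le.2 hb)
  rw [Real.dist_eq, abs_lt]
  constructor <;> linarith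

lemma H_hasDeriv {v : ℝ} (hv : 0 < v) : HasDerivAt H (Rfun (H v)) v := by
  obtain ⟨hy0, hFy⟩ := hH v hv
  set y₀ := H v with hy₀def
  have hF : HasDerivAt chi1CDF (q2 (-(1:ℝ)/2) y₀ / Real.sqrt (2 * π)) y₀ := by
    have h := intervalIntegral.integral_hasDerivAt_right
      (f := fun t => q2 (-(1:ℝ)/2) t / Real.sqrt (2 * π)) (a := 0) (b := y₀)
      ((q2_ii le_rfl hy0.le).div_const _)
      ⟨Set.univ, Filter.univ_mem, (((q2_meas _).div_const _).aestronglyMeasurable.restrict)⟩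
      ((q2_contAt _ hy0).div_const _)
    exact h
  have hev : 1 - chi1CDF y₀ = Real.exp (-v) := by rw [hFy]; ring
  have hne : 1 - chi1CDF y₀ ≠ 0 := by rw [hev]; exact (Real.exp_pos _).ne'
  have h1F : HasDerivAt (fun y => 1 - chi1CDF y) (-(q2 (-(1:ℝ)/2) y₀ / Real.sqrt (2 * π))) y₀ :=
    hF.const_sub 1
  have hlog := (h1F.log hne).neg
  have hq2pos : 0 < q2 (-(1:ℝ)/2) y₀ :=
    mul_pos (Real.rpow_pos_of_pos hy0 _) (Real.exp_pos _)
  have hne' : -(-(q2 (-(1:ℝ)/2) y₀ / Real.sqrt (2 * π)) / (1 - chi1CDF y₀)) ≠ 0 := by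
    rw [hev, neg_div, neg_neg]
    exact div_ne_zero (div_ne_zero hq2pos.ne' sqrt_two_pi_pos.ne') (Real.exp_pos _).ne'
  have hfg : ∀ᶠ w in nhds v, (fun y => -Real.log (1 - chi1CDF y)) (H w) = w := by
    filter_upwards [isOpen_Ioi.mem_nhds hv] with w hw
    rw [(hH w hw).2, show (1:ℝ) - (1 - Real.exp (-w)) = Real.exp (-w) by ring,
      Real.log_exp]
    ring
  have main := HasDerivAt.of_local_left_inverse (H_cont hH hv) hlog hne' hfg
  refine main.congr_deriv (Eq.symm ?_)
  have hJ : J (-(1:ℝ)/2) y₀ = Real.sqrt (2 * π) * Real.exp (-v) := by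
    rw [← chi1CDF_tail hy0, hev]
  have ha : q2 (-(1:ℝ)/2) y₀ * (Real.sqrt y₀ * Real.exp (y₀/2)) = 1 := by
    simp only [q2]
    rw [rpow_n12 hy0, show -y₀/2 = -(y₀/2) by ring, Real.exp_neg]
    have h1 : Real.sqrt y₀ ≠ 0 := (Real.sqrt_pos.2 hy0).ne'
    have h2 : Real.exp (y₀/2) ≠ 0 := (Real.exp_pos _).ne'
    field_simp
  rw [hev, neg_div, neg_neg, div_div, inv_div]
  rw [show Real.sqrt (2 * π) * Real.exp (-v) = J (-(1:ℝ)/2) y₀ from hJ.symm]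
  rw [Rfun, eq_div_iff hq2pos.ne']
  linear_combination J (-(1:ℝ)/2) y₀ * ha


include hH

lemma deriv2_eq {v : ℝ} (hv : 0 < v) :
    deriv (deriv H) v
      = Rfun (H v) * (1/(2*H v) + 1/2) * Rfun (H v) - Rfun (H v) := by
  have h1 : deriv H =ᶠ[nhds v] fun w => Rfun (H w) := by
    filter_upwards [isOpen_Ioi.mem_nhds hv] with w hw
    exact (H_hasDeriv hH hw).deriv
  rw [Filter.EventuallyEq.deriv_eq h1]
  have hcomp : HasDerivAt (fun w => Rfun (H w))
      ((Rfun (H v) * (1/(2*H v) + 1/2) - 1) * Rfun (H v)) v :=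
    (Rfun_hasDeriv (hH v hv).1).comp v (H_hasDeriv hH hv)
  rw [hcomp.deriv]; ring

end H

lemma claim1 {y : ℝ} (hy : 0 < y) :
    y * (Rfun y - 2) = -2 + 3 * (y * Real.sqrt y * Real.exp (y/2) * J (-(5:ℝ)/2) y) := by
  have h1 := J_eq (p := -(1:ℝ)/2) (by norm_num) hy
  have h2 := J_eq (p := -(3:ℝ)/2) (by norm_num) hy
  rw [show (-(1:ℝ)/2 - 1) = -(3:ℝ)/2 by norm_num] at h1
  rw [show (-(3:ℝ)/2 - 1) = -(5:ℝ)/2 by norm_num] at h2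
  rw [Rfun, h1, h2, rpow_n12 hy, rpow_n32 hy]
  have ha : Real.sqrt y ≠ 0 := (Real.sqrt_pos.2 hy).ne'
  have hE' : Real.exp (-y/2) = (Real.exp (y/2))⁻¹ := by
    rw [show -y/2 = -(y/2) by ring, Real.exp_neg]
  rw [hE']
  have hEne : Real.exp (y/2) ≠ 0 := (Real.exp_pos _).ne'
  have haa : Real.sqrt y * Real.sqrt y = y := Real.mul_self_sqrt hy.le
  field_simp
  ring_nf

lemma claim2 {y : ℝ} (hy : 0 < y) :
    0 ≤ y * Real.sqrt y * Real.exp (y/2) * J (-(5:ℝ)/2) y ∧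
    y * Real.sqrt y * Real.exp (y/2) * J (-(5:ℝ)/2) y ≤ 2 / y := by
  have hJ5 : J (-(5:ℝ)/2) y ≤ y ^ (-(5:ℝ)/2) * J 0 y := by
    have := J_mul_le (p := 0) (r := -(5:ℝ)/2) le_rfl (by norm_num) hy
    rwa [zero_add] at this
  rw [J_zero hy, rpow_n52 hy] at hJ5
  have ha : 0 < Real.sqrt y := Real.sqrt_pos.2 hy
  have haa : Real.sqrt y * Real.sqrt y = y := Real.mul_self_sqrt hy.le
  have hE : 0 < Real.exp (y/2) := Real.exp_pos _
  have hE' : Real.exp (-y/2) = (Real.exp (y/2))⁻¹ := by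
    rw [show -y/2 = -(y/2) by ring, Real.exp_neg]
  constructor
  · have := J_nonneg (-(5:ℝ)/2) hy
    positivity
  · have hfac : 0 < y * Real.sqrt y * Real.exp (y/2) := by positivity
    calc y * Real.sqrt y * Real.exp (y/2) * J (-(5:ℝ)/2) y
        ≤ y * Real.sqrt y * Real.exp (y/2) * ((y * y * Real.sqrt y)⁻¹ * (2 * Real.exp (-y/2))) :=
          mul_le_mul_of_nonneg_left hJ5 hfac.le
      _ = 2 / y := by
          rw [hE']
          field_simp

lemma lim2 : Tendsto (fun y => y * (Rfun y - 2)) atTop (nhds (-2)) := by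
  have hupper : Tendsto (fun y : ℝ => -2 + 6 * y⁻¹) atTop (nhds (-2 + 6 * 0)) :=
    tendsto_const_nhds.add (tendsto_inv_atTop_zero.const_mul 6)
  rw [show (-2 + 6 * (0:ℝ)) = -2 by norm_num] at hupper
  refine tendsto_of_tendsto_of_tendsto_of_le_of_le' tendsto_const_nhds hupper ?_ ?_
  · filter_upwards [eventually_gt_atTop 0] with y hy
    have := (claim2 hy).1
    rw [claim1 hy]
    linarith
  · filter_upwards [eventually_gt_atTop 0] with y hy
    have h := (claim2 hy).2
    rw [claim1 hy]
    have : 2 / y = 2 * y⁻¹ := by rw [div_eq_mul_inv]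
    rw [this] at h
    linarith

lemma limR : Tendsto Rfun atTop (nhds 2) := by
  have h : Tendsto (fun y => y * (Rfun y - 2) * y⁻¹ + 2) atTop (nhds (-2 * 0 + 2)) :=
    (lim2.mul tendsto_inv_atTop_zero).add tendsto_const_nhds
  rw [show (-2 * (0:ℝ) + 2) = 2 by norm_num] at h
  refine h.congr' ?_
  filter_upwards [eventually_gt_atTop 0] with y hy
  field_simp
  ring

/-- With `H̃ = F⁻¹ ∘ G` (`F` the χ²₁ CDF, `G` standard exponential CDF),
`H̃(v)·H̃''(v) → 0` as `v → ∞`. -/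
theorem tildeH_times_second_deriv_tendsto_zero (H : ℝ → ℝ)
    (hH : ∀ v ∈ Set.Ioi (0:ℝ), 0 < H v ∧ chi1CDF (H v) = 1 - Real.exp (-v)) :
    Tendsto (fun v => H v * deriv (deriv H) v) atTop (nhds 0) := by
  have limPsi : Tendsto (fun y => Rfun y * (Rfun y / 2 + y * (Rfun y - 2) / 2)) atTop
      (nhds (2 * (2 / 2 + -2 / 2))) :=
    limR.mul ((limR.div_const 2).add (lim2.div_const 2))
  rw [show (2 * (2/2 + -2/2) : ℝ) = 0 by norm_num] at limPsi
  refine (limPsi.comp (H_top hH)).congr' ?_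
  filter_upwards [eventually_gt_atTop 0] with v hv
  have h2 := deriv2_eq hH hv
  have hy : 0 < H v := (hH v hv).1
  simp only [Function.comp]
  rw [h2]
  field_simp
  ring
end

section
/- With $\tilde H=F^{-1}\circ G$ where $F$ is the $\chi^2_1$ CDF and $G$ the standard exponential CDF, one has $\frac{\tilde H'''(v)}{\tilde H''(v)}(1-e^{-v})\to 0$ as $v\to 0^+$, and $\frac{\tilde H'''(v)}{\tilde H''(v)}\to 0$ as $v\to\infty$. -/
open Filter Real Set MeasureTheory

noncomputable def SG (x : ℝ) : ℝ := ∫ s in (0:ℝ)..x, Real.exp (-s^2/2)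
noncomputable def TG (x : ℝ) : ℝ := Real.sqrt (π/2) - SG x
noncomputable def psiG (x : ℝ) : ℝ := Real.exp (x^2/2) * TG x

lemma gauss_cont : Continuous (fun s : ℝ => Real.exp (-s^2/2)) := by
  continuity

lemma SG_hasDerivAt (x : ℝ) : HasDerivAt SG (Real.exp (-x^2/2)) x := by
  refine intervalIntegral.integral_hasDerivAt_right
    (gauss_cont.intervalIntegrable _ _) ?_ gauss_cont.continuousAt
  exact gauss_cont.stronglyMeasurableAtFilter _ _

lemma SG_continuous : Continuous SG :=
  continuous_iff_continuousAt.2 fun x => (SG_hasDerivAt x).continuousAt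

lemma SG_strictMono : StrictMono SG := by
  have : ∀ x : ℝ, 0 < Real.exp (-x^2/2) := fun x => Real.exp_pos _
  refine strictMono_of_deriv_pos fun x => ?_
  rw [(SG_hasDerivAt x).deriv]; exact this x

lemma sqrt_pi_half : Real.sqrt (2*π) / 2 = Real.sqrt (π/2) := by
  have h4 : Real.sqrt 4 = 2 := by
    rw [show (4:ℝ) = 2^2 by norm_num, Real.sqrt_sq (by norm_num)]
  rw [show (2*π) = 4 * (π/2) by ring, Real.sqrt_mul (by norm_num) (π/2), h4]
  ring

lemma SG_tendsto : Tendsto SG atTop (nhds (Real.sqrt (π/2))) := by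
  have hfun : (fun s : ℝ => Real.exp (-s^2/2)) = fun s : ℝ => Real.exp (-(1/2) * s^2) := by
    funext s; ring_nf
  have hint : IntegrableOn (fun s : ℝ => Real.exp (-s^2/2)) (Set.Ioi 0) := by
    rw [hfun]
    exact (integrableOn_Ioi_exp_neg_mul_sq_iff.2 (by norm_num)).mono_set (by norm_num)
  have := MeasureTheory.intervalIntegral_tendsto_integral_Ioi 0 hint tendsto_id
  have hval : (∫ s in Set.Ioi (0:ℝ), Real.exp (-s^2/2)) = Real.sqrt (π/2) := by
    rw [hfun, integral_gaussian_Ioi, show π / (1/2) = 2*π by ring, sqrt_pi_half]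
  rw [hval] at this
  exact this

lemma SG_le (x : ℝ) : SG x ≤ Real.sqrt (π/2) :=
  Monotone.ge_of_tendsto SG_strictMono.monotone SG_tendsto x

lemma SG_lt (x : ℝ) : SG x < Real.sqrt (π/2) :=
  lt_of_lt_of_le (SG_strictMono (lt_add_one x)) (SG_le (x+1))

lemma TG_pos (x : ℝ) : 0 < TG x := sub_pos.2 (SG_lt x)

lemma TG_hasDerivAt (x : ℝ) : HasDerivAt TG (-Real.exp (-x^2/2)) x :=
  ((SG_hasDerivAt x).const_sub (Real.sqrt (π/2)))

lemma TG_continuous : Continuous TG := continuous_const.sub SG_continuous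

lemma TG_tendsto : Tendsto TG atTop (nhds 0) := by
  have := (tendsto_const_nhds (x := Real.sqrt (π/2)) (f := atTop)).sub SG_tendsto
  have h : TG = fun x => Real.sqrt (π/2) - SG x := rfl
  rw [h]; simpa using this

lemma TG_zero : TG 0 = Real.sqrt (π/2) := by
  simp [TG, SG]

lemma psiG_pos (x : ℝ) : 0 < psiG x := mul_pos (Real.exp_pos _) (TG_pos x)

lemma psiG_continuous : Continuous psiG :=
  (Real.continuous_exp.comp (by continuity)).mul TG_continuous

lemma psiG_hasDerivAt (x : ℝ) : HasDerivAt psiG (x * psiG x - 1) x := by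
  have h1 : HasDerivAt (fun x : ℝ => Real.exp (x^2/2)) (Real.exp (x^2/2) * x) x := by
    have : HasDerivAt (fun x : ℝ => x^2/2) x x := by
      simpa using (hasDerivAt_pow 2 x).div_const 2
    simpa [mul_comm] using this.exp
  have := h1.mul (TG_hasDerivAt x)
  refine this.congr_deriv (Eq.symm ?_)
  have : Real.exp (x^2/2) * Real.exp (-x^2/2) = 1 := by
    rw [← Real.exp_add]; ring_nf; exact Real.exp_zero
  unfold psiG
  nlinarith [this]

/-- If `f' ≤ 0` on `(0,∞)` and `f → 0` at `+∞`, then `f ≥ 0` on `(0,∞)`. -/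
lemma nonneg_of_deriv_nonpos_tendsto {f f' : ℝ → ℝ}
    (hd : ∀ x ∈ Set.Ioi (0:ℝ), HasDerivAt f (f' x) x)
    (hs : ∀ x ∈ Set.Ioi (0:ℝ), f' x ≤ 0)
    (hl : Tendsto f atTop (nhds 0)) :
    ∀ x ∈ Set.Ioi (0:ℝ), 0 ≤ f x := by
  intro x hx
  have hsub : Set.Ici x ⊆ Set.Ioi (0:ℝ) := fun y hy => Set.mem_Ioi.2 (lt_of_lt_of_le (Set.mem_Ioi.1 hx) (Set.mem_Ici.1 hy))
  have hanti : AntitoneOn f (Set.Ici x) := by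
    refine antitoneOn_of_deriv_nonpos (convex_Ici x) ?_ ?_ ?_
    · exact fun y hy => ((hd y (hsub hy)).continuousAt).continuousWithinAt
    · intro y hy
      rw [interior_Ici] at hy
      exact ((hd y (hsub (Set.mem_Ici.2 (le_of_lt hy)))).differentiableAt).differentiableWithinAt
    · intro y hy
      rw [interior_Ici] at hy
      rw [(hd y (hsub (Set.mem_Ici.2 (le_of_lt hy)))).deriv]
      exact hs y (hsub (Set.mem_Ici.2 (le_of_lt hy)))
  refine le_of_tendsto hl ?_
  filter_upwards [eventually_ge_atTop x] with y hy
  exact hanti (le_refl x : x ∈ Set.Ici x) hy hy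

lemma exp_poly_tendsto (n : ℕ) (hn : n ≠ 0) (c : ℝ) :
    Tendsto (fun x : ℝ => Real.exp (-x^2/2) * (c * (x^n)⁻¹)) atTop (nhds 0) := by
  have h1 : Tendsto (fun x : ℝ => Real.exp (-x^2/2)) atTop (nhds 0) := by
    have : Tendsto (fun x : ℝ => -x^2/2) atTop atBot := by
      have := tendsto_pow_atTop (n := 2) (by norm_num) (α := ℝ)
      exact (tendsto_neg_atBot_iff.2 this).atBot_div_const (by norm_num)
    exact Real.tendsto_exp_atBot.comp this
  have h2 : Tendsto (fun x : ℝ => c * (x^n)⁻¹) atTop (nhds (c * 0)) := by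
    refine tendsto_const_nhds.mul ?_
    exact (tendsto_pow_atTop hn).inv_tendsto_atTop
  have := h1.mul h2
  simpa using this

/-- Upper Mills bound: `TG x ≤ e^{-x²/2}(x⁻¹ - x⁻³ + 3 x⁻⁵)` for `x > 0`. -/
lemma TG_upper : ∀ x ∈ Set.Ioi (0:ℝ),
    TG x ≤ Real.exp (-x^2/2) * (x⁻¹ - (x^3)⁻¹ + 3*(x^5)⁻¹) := by
  have key := nonneg_of_deriv_nonpos_tendsto
    (f := fun x => Real.exp (-x^2/2) * (x⁻¹ - (x^3)⁻¹ + 3*(x^5)⁻¹) - TG x)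
    (f' := fun x => Real.exp (-x^2/2) * (-15*(x^6)⁻¹)) ?_ ?_ ?_
  · intro x hx
    have := key x hx
    linarith
  · intro x hx
    have hx0 : x ≠ 0 := ne_of_gt hx
    have hexp : HasDerivAt (fun x : ℝ => Real.exp (-x^2/2)) (Real.exp (-x^2/2) * (-x)) x := by
      have h : HasDerivAt (fun x : ℝ => -x^2/2) (-x) x := by
        have h2 := ((hasDerivAt_pow 2 x).neg).div_const 2
        refine h2.congr_deriv (Eq.symm ?_)
        push_cast; ring
      simpa [mul_comm] using h.exp
    have hP : HasDerivAt (fun x : ℝ => x⁻¹ - (x^3)⁻¹ + 3*(x^5)⁻¹)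
        (-(x^2)⁻¹ - (-(3*x^2) / (x^3)^2) + 3 * (-(5*x^4) / (x^5)^2)) x := by
      have h1 := hasDerivAt_inv hx0
      have h3 := (hasDerivAt_pow 3 x).inv (pow_ne_zero 3 hx0)
      have h5 := ((hasDerivAt_pow 5 x).inv (pow_ne_zero 5 hx0)).const_mul (3:ℝ)
      have := (h1.sub h3).add h5
      refine this.congr_deriv (Eq.symm ?_)
      all_goals (push_cast; ring)
    have := hexp.mul hP
    have h2 := this.sub (TG_hasDerivAt x)
    refine h2.congr_deriv (Eq.symm ?_)
    have hexpne : Real.exp (-x^2/2) ≠ 0 := (Real.exp_pos _).ne'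
    field_simp
    try ring
  · intro x hx
    have hx0 : (0:ℝ) < x := hx
    have : (0:ℝ) < (x^6)⁻¹ := by positivity
    nlinarith [Real.exp_pos (-x^2/2), this]
  · have h1 := exp_poly_tendsto 1 one_ne_zero 1
    have h3 := exp_poly_tendsto 3 (by norm_num) (-1)
    have h5 := exp_poly_tendsto 5 (by norm_num) 3
    have := ((h1.add h3).add h5).sub TG_tendsto
    convert (by simpa using this : Tendsto (fun x : ℝ =>
      (Real.exp (-x^2/2) * (1 * (x^1)⁻¹) + Real.exp (-x^2/2) * (-1 * (x^3)⁻¹)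
        + Real.exp (-x^2/2) * (3 * (x^5)⁻¹)) - TG x) atTop (nhds 0)) using 2 with x
    ring

/-- Lower Mills bound: `e^{-x²/2}(x⁻¹ - x⁻³ + 3x⁻⁵ - 15x⁻⁷) ≤ TG x` for `x > 0`. -/
lemma TG_lower : ∀ x ∈ Set.Ioi (0:ℝ),
    Real.exp (-x^2/2) * (x⁻¹ - (x^3)⁻¹ + 3*(x^5)⁻¹ - 15*(x^7)⁻¹) ≤ TG x := by
  have key := nonneg_of_deriv_nonpos_tendsto
    (f := fun x => TG x - Real.exp (-x^2/2) * (x⁻¹ - (x^3)⁻¹ + 3*(x^5)⁻¹ - 15*(x^7)⁻¹))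
    (f' := fun x => Real.exp (-x^2/2) * (-105*(x^8)⁻¹)) ?_ ?_ ?_
  · intro x hx
    have := key x hx
    linarith
  · intro x hx
    have hx0 : x ≠ 0 := ne_of_gt hx
    have hexp : HasDerivAt (fun x : ℝ => Real.exp (-x^2/2)) (Real.exp (-x^2/2) * (-x)) x := by
      have h : HasDerivAt (fun x : ℝ => -x^2/2) (-x) x := by
        have h2 := ((hasDerivAt_pow 2 x).neg).div_const 2
        refine h2.congr_deriv (Eq.symm ?_)
        push_cast; ring
      simpa [mul_comm] using h.exp
    have hP : HasDerivAt (fun x : ℝ => x⁻¹ - (x^3)⁻¹ + 3*(x^5)⁻¹ - 15*(x^7)⁻¹)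
        (-(x^2)⁻¹ - (-(3*x^2) / (x^3)^2) + 3 * (-(5*x^4) / (x^5)^2)
          - 15 * (-(7*x^6) / (x^7)^2)) x := by
      have h1 := hasDerivAt_inv hx0
      have h3 := (hasDerivAt_pow 3 x).inv (pow_ne_zero 3 hx0)
      have h5 := ((hasDerivAt_pow 5 x).inv (pow_ne_zero 5 hx0)).const_mul (3:ℝ)
      have h7 := ((hasDerivAt_pow 7 x).inv (pow_ne_zero 7 hx0)).const_mul (15:ℝ)
      have := ((h1.sub h3).add h5).sub h7
      refine this.congr_deriv (Eq.symm ?_)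
      all_goals (push_cast; ring)
    have h2 := (TG_hasDerivAt x).sub (hexp.mul hP)
    refine h2.congr_deriv (Eq.symm ?_)
    have hexpne : Real.exp (-x^2/2) ≠ 0 := (Real.exp_pos _).ne'
    field_simp
    try ring
  · intro x hx
    have hx0 : (0:ℝ) < x := hx
    have : (0:ℝ) < (x^8)⁻¹ := by positivity
    nlinarith [Real.exp_pos (-x^2/2), this]
  · have h1 := exp_poly_tendsto 1 one_ne_zero 1
    have h3 := exp_poly_tendsto 3 (by norm_num) (-1)
    have h5 := exp_poly_tendsto 5 (by norm_num) 3
    have h7 := exp_poly_tendsto 7 (by norm_num) (-15)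
    have := TG_tendsto.sub (((h1.add h3).add h5).add h7)
    convert (by simpa using this : Tendsto (fun x : ℝ => TG x -
      (Real.exp (-x^2/2) * (1 * (x^1)⁻¹) + Real.exp (-x^2/2) * (-1 * (x^3)⁻¹)
        + Real.exp (-x^2/2) * (3 * (x^5)⁻¹) + Real.exp (-x^2/2) * (-15 * (x^7)⁻¹)))
      atTop (nhds 0)) using 2 with x
    ring

noncomputable def W1 (x : ℝ) : ℝ := 2*((1+x^2)*psiG x - x)*psiG x
noncomputable def W2 (x : ℝ) : ℝ :=
  2*((2*x*psiG x + (1+x^2)*(x*psiG x - 1) - 1)*psiG x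
    + ((1+x^2)*psiG x - x)*(x*psiG x - 1))

lemma W1_hasDerivAt (x : ℝ) : HasDerivAt W1 (W2 x) x := by
  have hp := psiG_hasDerivAt x
  have h1 : HasDerivAt (fun x => (1+x^2)*psiG x - x)
      ((2*x)*psiG x + (1+x^2)*(x*psiG x - 1) - 1) x := by
    have ha : HasDerivAt (fun x : ℝ => 1+x^2) (2*x) x := by
      have := (hasDerivAt_pow 2 x).const_add 1
      refine this.congr_deriv (Eq.symm ?_)
      all_goals (push_cast; ring)
    exact (ha.mul hp).sub (hasDerivAt_id x)
  have key := ((h1.const_mul (2:ℝ)).mul hp)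
  refine key.congr_deriv (Eq.symm ?_)
  unfold W2; ring

lemma W1_continuous : Continuous W1 := by
  have h := psiG_continuous
  unfold W1
  continuity

lemma W2_continuous : Continuous W2 := by
  have h := psiG_continuous
  unfold W2
  continuity

lemma aux_m_pos (a u : ℝ) (ha : 0 < a) (ha16 : a ≤ 1/16)
    (h1 : 1 - a + 3*a^2 - 15*a^3 ≤ u) :
    a^2 ≤ (1+a)*u - 1 := by
  nlinarith [mul_le_mul_of_nonneg_left h1 (by linarith : (0:ℝ) ≤ 1+a),
    mul_pos ha ha, mul_pos (mul_pos ha ha) ha, sq_nonneg a]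

lemma aux_bound (a u : ℝ) (ha : 0 < a) (ha16 : a ≤ 1/16)
    (h1 : 1 - a + 3*a^2 - 15*a^3 ≤ u) (h2 : u ≤ 1 - a + 3*a^2) :
    |(2*u*(u-1)*a)/((1+a)*u-1) + (2*u - 1)| ≤ 20*a := by
  have hmlb : a^2 ≤ (1+a)*u - 1 := aux_m_pos a u ha ha16 h1
  have hm0 : (0:ℝ) < (1+a)*u - 1 := lt_of_lt_of_le (by positivity) hmlb
  have hident : (2*u*(u-1)*a)/((1+a)*u-1) + (2*u - 1)
      = 2*(u-1) + (((1+a)*u-1) + 2*a*u*(u-1))/((1+a)*u-1) := by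
    rw [add_div, div_self hm0.ne']
    ring
  have hNN : |((1+a)*u-1) + 2*a*u*(u-1)| ≤ 18*a^3 := by
    rw [abs_le]
    constructor
    · nlinarith [mul_pos ha ha, mul_pos (mul_pos ha ha) ha, sq_nonneg (u-1),
        mul_le_mul_of_nonneg_left h1 (by linarith : (0:ℝ) ≤ 2*a),
        mul_le_mul_of_nonneg_left h2 (by linarith : (0:ℝ) ≤ 2*a),
        mul_le_mul_of_nonneg_left h1 (by linarith : (0:ℝ) ≤ 1+a),
        mul_nonneg (mul_nonneg ha.le ha.le) (sub_nonneg.2 h1)]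
    · nlinarith [mul_pos ha ha, mul_pos (mul_pos ha ha) ha, sq_nonneg (u-1),
        mul_le_mul_of_nonneg_left h2 (by linarith : (0:ℝ) ≤ 2*a),
        mul_le_mul_of_nonneg_left h2 (by linarith : (0:ℝ) ≤ 1+a),
        mul_nonneg (mul_nonneg ha.le ha.le) (sub_nonneg.2 (le_trans h1 h2))]
  have hu1 : |u - 1| ≤ a := by
    rw [abs_le]
    constructor <;> nlinarith [mul_pos ha ha, mul_pos (mul_pos ha ha) ha]
  rw [hident]
  have habs : |2*(u-1) + (((1+a)*u-1) + 2*a*u*(u-1))/((1+a)*u-1)|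
      ≤ 2*|u-1| + |((1+a)*u-1) + 2*a*u*(u-1)|/((1+a)*u-1) := by
    refine le_trans (abs_add_le _ _) ?_
    rw [abs_div, abs_of_pos hm0, abs_mul]
    norm_num
  refine le_trans habs ?_
  have hdivle : |((1+a)*u-1) + 2*a*u*(u-1)|/((1+a)*u-1) ≤ 18*a^3/a^2 := by
    apply div_le_div₀ (by positivity) hNN (by positivity) hmlb
  have : 18*a^3/a^2 = 18*a := by
    field_simp
  rw [this] at hdivle
  linarith [mul_le_mul_of_nonneg_left hu1 (by norm_num : (0:ℝ) ≤ 2)]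

lemma aux_ident (x t : ℝ) (hx : 0 < x) (ht : 0 < t) (hD : 0 < (1+x^2)*t - x) :
    (2*((2*x*t + (1+x^2)*(x*t - 1) - 1)*t + ((1+x^2)*t - x)*(x*t-1))) * t
      / (2*((1+x^2)*t - x)*t)
    = (2*(x*t)*((x*t)-1)*((x^2)⁻¹))/((1+(x^2)⁻¹)*(x*t)-1) + (2*(x*t) - 1) := by
  have hxne : x ≠ 0 := ne_of_gt hx
  have hm : (1+(x^2)⁻¹)*(x*t)-1 = ((1+x^2)*t - x)/x := by
    field_simp
    ring
  rw [hm]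
  have hDne : (1+x^2)*t - x ≠ 0 := hD.ne'
  have htne : t ≠ 0 := ht.ne'
  rw [div_add' _ _ _ (div_ne_zero hDne hxne), div_eq_div_iff (by positivity) (div_ne_zero hDne hxne)]
  field_simp
  ring

/-- Key bound: for `x ≥ 4`, `|W2 x * psiG x / W1 x| ≤ 20/x^2`. -/
lemma ratio_bound : ∀ x : ℝ, 4 ≤ x → |W2 x * psiG x / W1 x| ≤ 20/x^2 := by
  intro x hx4
  have hx : (0:ℝ) < x := by linarith
  have hxne : x ≠ 0 := ne_of_gt hx
  have htpos : 0 < psiG x := psiG_pos x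
  have hapos : 0 < (x^2)⁻¹ := by positivity
  have ha16 : (x^2)⁻¹ ≤ 1/16 := by
    rw [inv_le_comm₀ (by positivity) (by norm_num)]
    nlinarith
  have hexp : Real.exp (x^2/2) * Real.exp (-x^2/2) = 1 := by
    rw [← Real.exp_add]; ring_nf; exact Real.exp_zero
  have hepos : (0:ℝ) < Real.exp (x^2/2) := Real.exp_pos _
  -- bounds on u = x * psiG x
  have hcomb : ∀ P : ℝ, Real.exp (x^2/2) * (Real.exp (-x^2/2) * P) = P := by
    intro P; rw [← mul_assoc, hexp, one_mul]
  have hu_ub : x * psiG x ≤ 1 - (x^2)⁻¹ + 3*((x^2)⁻¹)^2 := by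
    have h0 := mul_le_mul_of_nonneg_left (TG_upper x hx) hepos.le
    rw [hcomb] at h0
    have h2 := mul_le_mul_of_nonneg_left h0 hx.le
    calc x * psiG x = x * (Real.exp (x^2/2) * TG x) := rfl
      _ ≤ x * (x⁻¹ - (x^3)⁻¹ + 3*(x^5)⁻¹) := h2
      _ = 1 - (x^2)⁻¹ + 3*((x^2)⁻¹)^2 := by field_simp
  have hu_lb : 1 - (x^2)⁻¹ + 3*((x^2)⁻¹)^2 - 15*((x^2)⁻¹)^3 ≤ x * psiG x := by
    have h0 := mul_le_mul_of_nonneg_left (TG_lower x hx) hepos.le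
    rw [hcomb] at h0
    have h2 := mul_le_mul_of_nonneg_left h0 hx.le
    calc 1 - (x^2)⁻¹ + 3*((x^2)⁻¹)^2 - 15*((x^2)⁻¹)^3
        = x * (x⁻¹ - (x^3)⁻¹ + 3*(x^5)⁻¹ - 15*(x^7)⁻¹) := by field_simp
      _ ≤ x * (Real.exp (x^2/2) * TG x) := h2
      _ = x * psiG x := rfl
  have hm := aux_m_pos ((x^2)⁻¹) (x * psiG x) hapos ha16 hu_lb
  have hm0 : (0:ℝ) < (1+(x^2)⁻¹)*(x * psiG x) - 1 := lt_of_lt_of_le (by positivity) hm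
  have hD : 0 < (1+x^2)*psiG x - x := by
    have hmx : (1+(x^2)⁻¹)*(x*psiG x)-1 = ((1+x^2)*psiG x - x)/x := by
      field_simp; ring
    rw [hmx] at hm0
    exact (div_pos_iff.1 hm0).resolve_right (fun h => absurd h.2 (not_lt.2 hx.le)) |>.1
  have hident := aux_ident x (psiG x) hx htpos hD
  have hgoal : W2 x * psiG x / W1 x
      = (2*(x*psiG x)*((x*psiG x)-1)*((x^2)⁻¹))/((1+(x^2)⁻¹)*(x*psiG x)-1)
        + (2*(x*psiG x) - 1) := by
    rw [← hident]; rfl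
  rw [hgoal]
  have := aux_bound ((x^2)⁻¹) (x * psiG x) hapos ha16 hu_lb hu_ub
  calc |(2*(x*psiG x)*((x*psiG x)-1)*((x^2)⁻¹))/((1+(x^2)⁻¹)*(x*psiG x)-1)
        + (2*(x*psiG x) - 1)| ≤ 20*(x^2)⁻¹ := this
    _ = 20/x^2 := by ring

lemma fch_eq : (fun t : ℝ => t ^ (-(1:ℝ)/2) * Real.exp (-t/2) / Real.sqrt (2 * π))
    = fun t : ℝ => t ^ (-(1:ℝ)/2) * (Real.exp (-t/2) / Real.sqrt (2 * π)) := by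
  funext t; rw [mul_div_assoc]

lemma fch_intervalIntegrable {a b : ℝ} (ha : 0 ≤ a) (hb : 0 ≤ b) :
    IntervalIntegrable (fun t : ℝ => t ^ (-(1:ℝ)/2) * Real.exp (-t/2) / Real.sqrt (2 * π))
      volume a b := by
  rw [fch_eq]
  refine IntervalIntegrable.mul_continuousOn ?_ ?_
  · exact intervalIntegral.intervalIntegrable_rpow' (by norm_num)
  · exact (Real.continuous_exp.comp (by continuity)).continuousOn.div_const _

lemma sqrt_two_div_pi : Real.sqrt (2/π) = 2 / Real.sqrt (2*π) := by
  have hpi : (0:ℝ) < π := Real.pi_pos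
  have h2 : Real.sqrt (2/π) * Real.sqrt (2*π) = 2 := by
    rw [← Real.sqrt_mul (by positivity)]
    rw [show (2/π) * (2*π) = 4 by field_simp; ring]
    rw [show (4:ℝ) = 2^2 by norm_num, Real.sqrt_sq (by norm_num)]
  have hs : (0:ℝ) < Real.sqrt (2*π) := Real.sqrt_pos.2 (by positivity)
  field_simp at h2 ⊢
  linarith

lemma fch_point {s : ℝ} (hs : 0 < s) :
    (2*s) * ((s^2) ^ (-(1:ℝ)/2) * Real.exp (-s^2/2) / Real.sqrt (2 * π))
      = Real.sqrt (2/π) * Real.exp (-s^2/2) := by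
  have h1 : ((s^2 : ℝ)) ^ (-(1:ℝ)/2) = s⁻¹ := by
    rw [show (s^2 : ℝ) = s ^ ((2:ℕ):ℝ) by rw [Real.rpow_natCast],
      ← Real.rpow_mul hs.le]
    norm_num [Real.rpow_neg_one]
  rw [h1, sqrt_two_div_pi]
  have hsne : s ≠ 0 := ne_of_gt hs
  have hsq : Real.sqrt (2*π) ≠ 0 := by positivity
  field_simp

/-- Substitution: for `0 < ε ≤ y`,
`∫ t in ε..y, fch t = √(2/π) * (SG √y - SG √ε)`. -/
lemma fch_integral_sub {ε y : ℝ} (hε : 0 < ε) (hy : ε ≤ y) :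
    (∫ t in ε..y, t ^ (-(1:ℝ)/2) * Real.exp (-t/2) / Real.sqrt (2 * π))
      = Real.sqrt (2/π) * (SG (Real.sqrt y) - SG (Real.sqrt ε)) := by
  have hy0 : 0 < y := lt_of_lt_of_le hε hy
  have hsε : 0 < Real.sqrt ε := Real.sqrt_pos.2 hε
  have hss : Real.sqrt ε ≤ Real.sqrt y := Real.sqrt_le_sqrt hy
  have hsub := intervalIntegral.integral_comp_smul_deriv'
    (a := Real.sqrt ε) (b := Real.sqrt y)
    (f := fun s => s^2) (f' := fun s => 2*s)
    (g := fun t : ℝ => t ^ (-(1:ℝ)/2) * Real.exp (-t/2) / Real.sqrt (2 * π))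
    (fun s _ => by simpa [mul_comm] using hasDerivAt_pow 2 s)
    ((continuous_const.mul continuous_id).continuousOn) ?_
  · have him : (Real.sqrt ε)^2 = ε := Real.sq_sqrt hε.le
    have him' : (Real.sqrt y)^2 = y := Real.sq_sqrt hy0.le
    beta_reduce at hsub
    rw [him, him'] at hsub
    rw [← hsub]
    have hcong : ∀ s ∈ Set.uIcc (Real.sqrt ε) (Real.sqrt y),
        (2*s) • ((fun t : ℝ => t ^ (-(1:ℝ)/2) * Real.exp (-t/2) / Real.sqrt (2 * π)) ∘ (fun s => s^2)) s
          = Real.sqrt (2/π) * Real.exp (-s^2/2) := by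
      intro s hsmem
      rw [Set.uIcc_of_le hss] at hsmem
      have hs : 0 < s := lt_of_lt_of_le hsε hsmem.1
      simpa [Function.comp, smul_eq_mul] using fch_point hs
    rw [intervalIntegral.integral_congr hcong, intervalIntegral.integral_const_mul]
    congr 1
    have hadd := intervalIntegral.integral_add_adjacent_intervals
      (μ := volume) (a := (0:ℝ)) (b := Real.sqrt ε) (c := Real.sqrt y)
      (f := fun s : ℝ => Real.exp (-s^2/2))
      (gauss_cont.intervalIntegrable _ _) (gauss_cont.intervalIntegrable _ _)
    have : SG (Real.sqrt ε) + ∫ s in Real.sqrt ε..Real.sqrt y, Real.exp (-s^2/2)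
        = SG (Real.sqrt y) := hadd
    linarith
  · -- ContinuousOn g on image
    have hsubset : (fun s => s^2) '' (Set.uIcc (Real.sqrt ε) (Real.sqrt y))
        ⊆ Set.Ioi (0:ℝ) := by
      rintro t ⟨s, hsmem, rfl⟩
      rw [Set.uIcc_of_le hss] at hsmem
      have : 0 < s := lt_of_lt_of_le hsε hsmem.1
      exact pow_pos this 2
    refine ContinuousOn.mono ?_ hsubset
    refine ContinuousOn.div_const ?_ _
    refine ContinuousOn.mul ?_ ((Real.continuous_exp.comp (by continuity)).continuousOn)
    intro t ht
    exact (Real.continuousAt_rpow_const t _ (Or.inl (ne_of_gt ht))).continuousWithinAt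

/-- The χ²₁ CDF in terms of the Gaussian primitive. -/
lemma chi1CDF_eq_s6 {y : ℝ} (hy : 0 < y) :
    chi1CDF y = Real.sqrt (2/π) * SG (Real.sqrt y) := by
  have key : ∀ ε ∈ Set.Ioo (0:ℝ) y,
      chi1CDF y - Real.sqrt (2/π) * SG (Real.sqrt y)
        = (∫ t in (0:ℝ)..ε, t ^ (-(1:ℝ)/2) * Real.exp (-t/2) / Real.sqrt (2 * π))
          - Real.sqrt (2/π) * SG (Real.sqrt ε) := by
    intro ε hε
    have h1 := intervalIntegral.integral_add_adjacent_intervals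
      (a := (0:ℝ)) (b := ε) (c := y)
      (f := fun t : ℝ => t ^ (-(1:ℝ)/2) * Real.exp (-t/2) / Real.sqrt (2 * π))
      (fch_intervalIntegrable le_rfl hε.1.le) (fch_intervalIntegrable hε.1.le hy.le)
    have h2 := fch_integral_sub hε.1 hε.2.le
    unfold chi1CDF
    rw [← h1, h2]
    ring
  -- now take ε → 0⁺
  have hlim1 : Tendsto (fun ε => ∫ t in (0:ℝ)..ε,
      t ^ (-(1:ℝ)/2) * Real.exp (-t/2) / Real.sqrt (2 * π)) (nhdsWithin 0 (Set.Ioo 0 y))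
      (nhds 0) := by
    have hcont := intervalIntegral.continuousOn_primitive_interval
      (a := (0:ℝ)) (b := y) (μ := volume)
      (f := fun t : ℝ => t ^ (-(1:ℝ)/2) * Real.exp (-t/2) / Real.sqrt (2 * π)) ?_
    · have h0 : (0:ℝ) ∈ Set.uIcc (0:ℝ) y := Set.left_mem_uIcc
      have h1 := hcont 0 h0
      unfold ContinuousWithinAt at h1
      have hval : (fun x => ∫ t in (0:ℝ)..x,
          t ^ (-(1:ℝ)/2) * Real.exp (-t/2) / Real.sqrt (2 * π)) 0 = 0 := by
        simp
      rw [hval] at h1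
      refine h1.mono_left (nhdsWithin_mono 0 ?_)
      rw [Set.uIcc_of_le hy.le]
      exact Set.Ioo_subset_Icc_self
    · rw [Set.uIcc_of_le hy.le]
      exact (intervalIntegrable_iff_integrableOn_Icc_of_le hy.le).1
        (fch_intervalIntegrable le_rfl hy.le)
  have hlim2 : Tendsto (fun ε => Real.sqrt (2/π) * SG (Real.sqrt ε))
      (nhdsWithin 0 (Set.Ioo 0 y)) (nhds 0) := by
    have hc : Tendsto (fun ε : ℝ => SG (Real.sqrt ε)) (nhds 0) (nhds (SG (Real.sqrt 0))) :=
      (SG_continuous.comp Real.continuous_sqrt).tendsto 0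
    rw [Real.sqrt_zero, show SG 0 = 0 from by simp [SG]] at hc
    have h2 := (tendsto_const_nhds (x := Real.sqrt (2/π))
      (f := nhdsWithin (0:ℝ) (Set.Ioo 0 y))).mul
      (hc.mono_left (nhdsWithin_le_nhds (s := Set.Ioo 0 y)))
    simpa using h2
  haveI : (nhdsWithin (0:ℝ) (Set.Ioo 0 y)).NeBot := left_nhdsWithin_Ioo_neBot hy
  have hconst : Tendsto (fun _ : ℝ => chi1CDF y - Real.sqrt (2/π) * SG (Real.sqrt y))
      (nhdsWithin 0 (Set.Ioo 0 y)) (nhds (chi1CDF y - Real.sqrt (2/π) * SG (Real.sqrt y))) :=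
    tendsto_const_nhds
  have hzero : Tendsto (fun _ : ℝ => chi1CDF y - Real.sqrt (2/π) * SG (Real.sqrt y))
      (nhdsWithin 0 (Set.Ioo 0 y)) (nhds 0) := by
    have hev : (fun ε : ℝ => (∫ t in (0:ℝ)..ε, t ^ (-(1:ℝ)/2) * Real.exp (-t/2) / Real.sqrt (2 * π))
        - Real.sqrt (2/π) * SG (Real.sqrt ε))
        =ᶠ[nhdsWithin 0 (Set.Ioo 0 y)]
        (fun _ : ℝ => chi1CDF y - Real.sqrt (2/π) * SG (Real.sqrt y)) := by
      filter_upwards [self_mem_nhdsWithin] with ε hε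
      exact (key ε hε).symm
    have := (hlim1.sub hlim2).congr' hev
    simpa using this
  have := tendsto_nhds_unique hconst hzero
  linarith

lemma sqrt_half_mul : Real.sqrt (π/2) * Real.sqrt (2/π) = 1 := by
  rw [← Real.sqrt_mul (by positivity)]
  rw [show (π/2) * (2/π) = 1 by field_simp]
  exact Real.sqrt_one

noncomputable def JG (x : ℝ) : ℝ := -Real.log (Real.sqrt (2/π) * TG x)

lemma JG_inner_pos (x : ℝ) : 0 < Real.sqrt (2/π) * TG x :=
  mul_pos (Real.sqrt_pos.2 (by positivity)) (TG_pos x)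

lemma JG_hasDerivAt (x : ℝ) : HasDerivAt JG (Real.exp (-x^2/2) / TG x) x := by
  have h1 : HasDerivAt (fun x => Real.sqrt (2/π) * TG x)
      (Real.sqrt (2/π) * (-Real.exp (-x^2/2))) x := (TG_hasDerivAt x).const_mul _
  have h2 := (h1.log (JG_inner_pos x).ne').neg
  refine h2.congr_deriv (Eq.symm ?_)
  have hs : Real.sqrt (2/π) ≠ 0 := ne_of_gt (Real.sqrt_pos.2 (by positivity))
  have ht : TG x ≠ 0 := (TG_pos x).ne'
  field_simp

lemma JG_strictMono : StrictMono JG := by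
  refine strictMono_of_deriv_pos fun x => ?_
  rw [(JG_hasDerivAt x).deriv]
  exact div_pos (Real.exp_pos _) (TG_pos x)

lemma JG_zero : JG 0 = 0 := by
  unfold JG
  rw [TG_zero, mul_comm, sqrt_half_mul, Real.log_one, neg_zero]

/-- With `H̃ = F⁻¹ ∘ G` (`F` the χ²₁ CDF, `G` standard exponential CDF),
`(H̃'''(v)/H̃''(v))·(1 - e^{-v}) → 0` as `v → 0⁺`, and `H̃'''(v)/H̃''(v) → 0` as `v → ∞`. -/
theorem tildeH_third_deriv_ratio (H : ℝ → ℝ)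
    (hH : ∀ v ∈ Set.Ioi (0:ℝ), 0 < H v ∧ chi1CDF (H v) = 1 - Real.exp (-v)) :
    Tendsto (fun v => deriv (deriv (deriv H)) v / deriv (deriv H) v * (1 - Real.exp (-v)))
      (nhdsWithin 0 (Set.Ioi 0)) (nhds 0) ∧
    Tendsto (fun v => deriv (deriv (deriv H)) v / deriv (deriv H) v) atTop (nhds 0) := by
  set g : ℝ → ℝ := fun v => Real.sqrt (H v) with hgdef
  have hgpos : ∀ v ∈ Set.Ioi (0:ℝ), 0 < g v := fun v hv => Real.sqrt_pos.2 (hH v hv).1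
  have hTg : ∀ v ∈ Set.Ioi (0:ℝ), TG (g v) = Real.sqrt (π/2) * Real.exp (-v) := by
    intro v hv
    have h1 : chi1CDF (H v) = Real.sqrt (2/π) * SG (g v) := chi1CDF_eq_s6 (hH v hv).1
    have h2 : Real.sqrt (2/π) * SG (g v) = 1 - Real.exp (-v) := by
      rw [← h1]; exact (hH v hv).2
    have h3 : SG (g v) = Real.sqrt (π/2) * (1 - Real.exp (-v)) := by
      rw [← h2, ← mul_assoc, sqrt_half_mul, one_mul]
    unfold TG
    rw [h3]
    ring
  have hJg : ∀ v ∈ Set.Ioi (0:ℝ), JG (g v) = v := by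
    intro v hv
    unfold JG
    rw [hTg v hv, ← mul_assoc, mul_comm (Real.sqrt (2/π)), sqrt_half_mul, one_mul,
      Real.log_exp, neg_neg]
  -- continuity of g on Ioi 0
  have hgcont : ∀ v ∈ Set.Ioi (0:ℝ), ContinuousAt g v := by
    intro v hv
    rw [ContinuousAt]
    refine tendsto_order.2 ⟨?_, ?_⟩
    · intro b hb
      rcases le_or_gt b 0 with hb0 | hb0
      · filter_upwards [Ioi_mem_nhds hv] with w hw
        exact lt_of_le_of_lt hb0 (hgpos w hw)
      · have hJb : JG b < v := by
          rw [← hJg v hv]; exact JG_strictMono hb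
        filter_upwards [Ioi_mem_nhds hv, Ioi_mem_nhds hJb] with w hw hw2
        have : JG b < JG (g w) := by rw [hJg w hw]; exact hw2
        exact JG_strictMono.lt_iff_lt.1 this
    · intro b hb
      have hJb : v < JG b := by
        rw [← hJg v hv]; exact JG_strictMono hb
      filter_upwards [Ioi_mem_nhds hv, Iio_mem_nhds hJb] with w hw hw2
      have : JG (g w) < JG b := by rw [hJg w hw]; exact hw2
      exact JG_strictMono.lt_iff_lt.1 this
  -- derivative of g
  have hgd : ∀ v ∈ Set.Ioi (0:ℝ), HasDerivAt g (psiG (g v)) v := by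
    intro v hv
    have hd := HasDerivAt.of_local_left_inverse (hgcont v hv) (JG_hasDerivAt (g v))
      (ne_of_gt (div_pos (Real.exp_pos _) (TG_pos _)))
      (by filter_upwards [Ioi_mem_nhds hv] with w hw; exact hJg w hw)
    refine hd.congr_deriv (Eq.symm ?_)
    unfold psiG
    rw [inv_div]
    rw [eq_div_iff (Real.exp_pos _).ne']
    rw [mul_comm (Real.exp ((g v)^2/2)), mul_assoc, ← Real.exp_add]
    have hz : (g v)^2/2 + -(g v)^2/2 = 0 := by ring
    rw [hz, Real.exp_zero, mul_one]
  -- derivatives of H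
  have hHd : ∀ v ∈ Set.Ioi (0:ℝ), HasDerivAt H (2 * g v * psiG (g v)) v := by
    intro v hv
    have h2 : HasDerivAt (fun w => (g w)^2) (2 * g v * psiG (g v)) v := by
      have := (hgd v hv).pow 2
      refine this.congr_deriv (Eq.symm ?_)
      push_cast; ring
    refine h2.congr_of_eventuallyEq ?_
    filter_upwards [Ioi_mem_nhds hv] with w hw
    exact (Real.sq_sqrt (hH w hw).1.le).symm
  have hd1 : ∀ v ∈ Set.Ioi (0:ℝ), deriv H v = 2 * g v * psiG (g v) :=
    fun v hv => (hHd v hv).deriv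
  have hd2fun : ∀ v ∈ Set.Ioi (0:ℝ), HasDerivAt (fun w => 2 * g w * psiG (g w)) (W1 (g v)) v := by
    intro v hv
    have houter : HasDerivAt (fun x : ℝ => 2 * x * psiG x)
        (2 * psiG (g v) + 2 * g v * (g v * psiG (g v) - 1)) (g v) := by
      have h0 : HasDerivAt (fun x : ℝ => 2 * x) 2 (g v) := by
        simpa using (hasDerivAt_id (g v)).const_mul (2:ℝ)
      have := h0.mul (psiG_hasDerivAt (g v))
      refine this.congr_deriv (Eq.symm ?_)
      try ring
    have := houter.comp v (hgd v hv)
    refine this.congr_deriv (Eq.symm ?_)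
    unfold W1; ring
  have hd2 : ∀ v ∈ Set.Ioi (0:ℝ), deriv (deriv H) v = W1 (g v) := by
    intro v hv
    have hev : deriv H =ᶠ[nhds v] (fun w => 2 * g w * psiG (g w)) :=
      eventuallyEq_of_mem (Ioi_mem_nhds hv) (fun w hw => hd1 w hw)
    rw [hev.deriv_eq]
    exact (hd2fun v hv).deriv
  have hd3 : ∀ v ∈ Set.Ioi (0:ℝ), deriv (deriv (deriv H)) v = W2 (g v) * psiG (g v) := by
    intro v hv
    have hev : deriv (deriv H) =ᶠ[nhds v] (fun w => W1 (g w)) :=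
      eventuallyEq_of_mem (Ioi_mem_nhds hv) (fun w hw => hd2 w hw)
    rw [hev.deriv_eq]
    exact ((W1_hasDerivAt (g v)).comp v (hgd v hv)).deriv
  -- limit of g at infinity and at 0+
  have hgtop : Tendsto g atTop atTop := by
    refine tendsto_atTop.2 fun b => ?_
    have hb1 : b ≤ max b 1 := le_max_left _ _
    filter_upwards [eventually_gt_atTop (max (JG (max b 1)) 0)] with v hv
    have hv0 : v ∈ Set.Ioi (0:ℝ) := lt_of_le_of_lt (le_max_right _ _) hv
    have : JG (max b 1) < JG (g v) := by
      rw [hJg v hv0]; exact lt_of_le_of_lt (le_max_left _ _) hv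
    exact le_trans hb1 (JG_strictMono.lt_iff_lt.1 this).le
  have hg0 : Tendsto g (nhdsWithin 0 (Set.Ioi 0)) (nhds 0) := by
    refine tendsto_order.2 ⟨?_, ?_⟩
    · intro b hb
      filter_upwards [self_mem_nhdsWithin] with v hv
      exact lt_trans hb (hgpos v hv)
    · intro b hb
      have hJb : 0 < JG b := by rw [← JG_zero]; exact JG_strictMono hb
      filter_upwards [Ioo_mem_nhdsGT_of_mem (Set.mem_Ico.2 ⟨le_refl 0, hJb⟩),
        self_mem_nhdsWithin] with v hv hv0
      have : JG (g v) < JG b := by rw [hJg v hv0]; exact hv.2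
      exact JG_strictMono.lt_iff_lt.1 this
  constructor
  · -- limit at 0+
    have hW1ne : W1 0 ≠ 0 := by
      have := psiG_pos 0
      unfold W1
      nlinarith
    have hratio_cont : ContinuousAt (fun x => W2 x * psiG x / W1 x) 0 :=
      ContinuousAt.div ((W2_continuous.continuousAt).mul psiG_continuous.continuousAt)
        W1_continuous.continuousAt hW1ne
    have hA : Tendsto (fun v => W2 (g v) * psiG (g v) / W1 (g v))
        (nhdsWithin 0 (Set.Ioi 0)) (nhds (W2 0 * psiG 0 / W1 0)) :=
      (hratio_cont.tendsto).comp hg0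
    have hB : Tendsto (fun v : ℝ => 1 - Real.exp (-v)) (nhdsWithin 0 (Set.Ioi 0)) (nhds 0) := by
      have hc : Continuous (fun v : ℝ => 1 - Real.exp (-v)) := by continuity
      have := (hc.tendsto 0).mono_left (nhdsWithin_le_nhds (s := Set.Ioi (0:ℝ)))
      simpa using this
    have hprod := hA.mul hB
    rw [mul_zero] at hprod
    refine hprod.congr' ?_
    filter_upwards [self_mem_nhdsWithin] with v hv
    rw [hd3 v hv, hd2 v hv]
  · -- limit at infinity
    have hb : Tendsto (fun v => 20 / (g v)^2) atTop (nhds 0) := by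
      have h1 : Tendsto (fun x : ℝ => 20 / x^2) atTop (nhds 0) := by
        have := (tendsto_pow_atTop (two_ne_zero)).inv_tendsto_atTop (α := ℝ)
        have h2 := this.const_mul (20:ℝ)
        rw [mul_zero] at h2
        refine h2.congr fun x => ?_
        simp [Pi.inv_apply, div_eq_mul_inv]
      exact h1.comp hgtop
    refine squeeze_zero_norm' ?_ hb
    filter_upwards [hgtop.eventually (eventually_ge_atTop 4), eventually_gt_atTop 0]
      with v hv4 hv0
    rw [hd3 v hv0, hd2 v hv0, Real.norm_eq_abs]
    exact ratio_bound (g v) hv4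
end

section
/- Fix $M\ge 0$ and a sequence $v_a\to\infty$, and let $\tilde H_{a,M}(v)=G_{a,M}^{-1}(1-e^{-v})$ where $G_{a,M}$ is the noncentral $\chi^2_1(M^2/a)$ CDF. Then $\tilde H_{a,M}'$ is bounded uniformly on the relevant ranges, and $\tilde H_{a,M}'(v)\to 2$ as $v\to\infty$ and $a\to\infty$. -/
open MeasureTheory ProbabilityTheory Filter Real Set Topology

noncomputable def phiG (x : ℝ) : ℝ := (Real.sqrt (2 * Real.pi))⁻¹ * Real.exp (-x^2/2)

lemma phiG_def (x : ℝ) : phiG x = (Real.sqrt (2 * Real.pi))⁻¹ * Real.exp (-x^2/2) := rfl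



lemma phiG_eq_gauss : phiG = gaussianPDFReal 0 1 := by
  ext x; simp [phiG, gaussianPDFReal, neg_div]

lemma phiG_pos (x : ℝ) : 0 < phiG x := by
  have := Real.pi_pos
  unfold phiG; positivity

lemma phiG_even (x : ℝ) : phiG (-x) = phiG x := by simp [phiG, neg_pow]

lemma continuous_phiG : Continuous phiG := by
  unfold phiG; fun_prop

lemma integrable_phiG : Integrable phiG := by
  rw [phiG_eq_gauss]; exact integrable_gaussianPDFReal 0 1

lemma phiG_hasDeriv (x : ℝ) : HasDerivAt phiG (-x * phiG x) x := by
  have h1 : HasDerivAt (fun y : ℝ => -y^2/2) (-x) x := by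
    have := ((hasDerivAt_pow 2 x).neg).div_const 2
    simpa [neg_div] using this.congr_deriv (by ring)
  have h2 := (h1.exp).const_mul (Real.sqrt (2 * Real.pi))⁻¹
  have : phiG = fun y : ℝ => (Real.sqrt (2 * Real.pi))⁻¹ * Real.exp (-y^2/2) := rfl
  rw [this]
  refine h2.congr_deriv ?_
  beta_reduce; ring

lemma integral_phiG : ∫ x, phiG x = 1 := by
  rw [phiG_eq_gauss]
  exact integral_gaussianPDFReal_eq_one 0 one_ne_zero

noncomputable def PhiG (t : ℝ) : ℝ := ∫ x in Iic t, phiG x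
noncomputable def QG (t : ℝ) : ℝ := ∫ x in Ioi t, phiG x



lemma PhiG_hasDeriv (t : ℝ) : HasDerivAt PhiG (phiG t) t := by
  have key : PhiG = fun u => PhiG 0 + ∫ x in (0:ℝ)..u, phiG x := by
    funext u
    rw [← intervalIntegral.integral_Iic_sub_Iic integrable_phiG.integrableOn
      integrable_phiG.integrableOn]
    simp [PhiG]
  rw [key]
  exact (intervalIntegral.integral_hasDerivAt_right
    integrable_phiG.intervalIntegrable
    continuous_phiG.stronglyMeasurable.stronglyMeasurableAtFilter
    continuous_phiG.continuousAt).const_add _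

lemma PhiG_add_QG (t : ℝ) : PhiG t + QG t = 1 := by
  rw [PhiG, QG, ← integral_phiG, ← setIntegral_union (Iic_disjoint_Ioi le_rfl) measurableSet_Ioi
    integrable_phiG.integrableOn integrable_phiG.integrableOn, Iic_union_Ioi,
    setIntegral_univ]

lemma PhiG_neg (t : ℝ) : PhiG (-t) = QG t := by
  have h1 : PhiG (-t) = ∫ x in Iic (-t), phiG (-x) :=
    setIntegral_congr_fun measurableSet_Iic (fun x _ => (phiG_even x).symm)
  rw [h1, integral_comp_neg_Iic, neg_neg, QG]


lemma phiG_tendsto_zero : Tendsto phiG atTop (𝓝 0) := by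
  have h : Tendsto (fun x : ℝ => -x^2/2) atTop atBot := by
    apply Tendsto.atBot_div_const two_pos
    exact tendsto_neg_atBot_iff.mpr (tendsto_pow_atTop two_ne_zero)
  have := (Real.tendsto_exp_atBot).comp h
  have h2 : Tendsto (fun x : ℝ => (Real.sqrt (2*Real.pi))⁻¹ * Real.exp (-x^2/2)) atTop (𝓝 0) := by
    simpa using this.const_mul (Real.sqrt (2*Real.pi))⁻¹
  refine h2.congr fun x => (phiG_def x).symm

lemma integrable_mul_phiG : Integrable (fun x => x * phiG x) := by
  have h : Integrable (fun x : ℝ => x ^ (1:ℝ) * Real.exp (-(1/2 : ℝ) * x^2)) :=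
    integrable_rpow_mul_exp_neg_mul_sq (by norm_num : (0:ℝ) < 1/2) (by norm_num : (-1:ℝ) < 1)
  have h2 := ((h.const_mul (Real.sqrt (2*Real.pi))⁻¹).abs)
  refine Integrable.mono' h2 ?_ (ae_of_all _ fun x => ?_)
  · exact (continuous_id.mul continuous_phiG).aestronglyMeasurable
  · rw [Real.norm_eq_abs, abs_mul, abs_of_pos (phiG_pos x), phiG_def, Real.rpow_one]
    have hπ : (0:ℝ) < (Real.sqrt (2*Real.pi))⁻¹ := by
      have := Real.pi_pos; positivity
    rw [abs_mul, abs_mul, abs_of_pos hπ, Real.abs_exp]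
    have : Real.exp (-(1/2 : ℝ) * x^2) = Real.exp (-x^2/2) := by ring_nf
    rw [this]
    have he : (0:ℝ) < Real.exp (-x^2/2) := Real.exp_pos _
    nlinarith

lemma integral_mul_phiG {t : ℝ} : ∫ x in Ioi t, x * phiG x = phiG t := by
  have h := integral_Ioi_of_hasDerivAt_of_tendsto' (f := fun x => -phiG x)
    (f' := fun x => x * phiG x) (a := t) (m := 0) ?_ integrable_mul_phiG.integrableOn ?_
  · rw [h]; ring
  · intro x _
    exact (phiG_hasDeriv x).neg.congr_deriv (by ring)
  · simpa using phiG_tendsto_zero.neg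

lemma QG_nonneg (t : ℝ) : 0 ≤ QG t :=
  setIntegral_nonneg measurableSet_Ioi fun x _ => (phiG_pos x).le

lemma PhiG_nonneg (t : ℝ) : 0 ≤ PhiG t :=
  setIntegral_nonneg measurableSet_Iic fun x _ => (phiG_pos x).le

lemma QG_le_one (t : ℝ) : QG t ≤ 1 := by
  have := PhiG_add_QG t; have := PhiG_nonneg t; linarith

lemma QG_antitone : Antitone QG := by
  intro s u hsu
  exact setIntegral_mono_set integrable_phiG.integrableOn
    (ae_of_all _ fun x => (phiG_pos x).le) (ae_of_all _ (Ioi_subset_Ioi hsu))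

lemma QG_le {t : ℝ} (ht : 0 < t) : QG t ≤ phiG t / t := by
  have h1 : QG t ≤ ∫ x in Ioi t, (x * phiG x) / t := by
    refine setIntegral_mono_on integrable_phiG.integrableOn
      ((integrable_mul_phiG.div_const t).integrableOn) measurableSet_Ioi fun x hx => ?_
    rw [le_div_iff₀ ht]
    have : 0 < x := ht.trans hx
    nlinarith [phiG_pos x, (le_of_lt hx : t ≤ x)]
  rw [integral_div, integral_mul_phiG] at h1
  exact h1

lemma QG_ge (t : ℝ) : t * phiG t / (t^2+1) ≤ QG t := by
  set ρ : ℝ → ℝ := fun x => phiG x * (x^4 + 2*x^2 - 1)/(x^2+1)^2 with hρ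
  have hderiv : ∀ x : ℝ, HasDerivAt (fun x => -(x/(x^2+1) * phiG x)) (ρ x) x := by
    intro x
    have h1 : HasDerivAt (fun x : ℝ => x/(x^2+1)) ((1 - x^2)/(x^2+1)^2) x := by
      have hd : HasDerivAt (fun x : ℝ => x^2+1) (2*x) x := by
        simpa using (hasDerivAt_pow 2 x).add_const 1
      have := (hasDerivAt_id x).div hd (by positivity)
      refine this.congr_deriv ?_; simp only [id]; ring
    have := ((h1.mul (phiG_hasDeriv x)).neg)
    refine this.congr_deriv ?_
    have hne : (x^2+1) ≠ 0 := by positivity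
    simp only [hρ]; field_simp; ring
  have hρle : ∀ x : ℝ, ρ x ≤ phiG x := by
    intro x
    rw [hρ]
    rw [div_le_iff₀ (by positivity)]
    nlinarith [phiG_pos x]
  have hρint : Integrable ρ := by
    have hcont : Continuous ρ := by
      apply Continuous.div
      · exact continuous_phiG.mul (by fun_prop)
      · fun_prop
      · intro x; positivity
    refine integrable_phiG.mono hcont.aestronglyMeasurable (ae_of_all _ fun x => ?_)
    rw [Real.norm_eq_abs, Real.norm_eq_abs, abs_of_pos (phiG_pos x), abs_div, abs_mul,
        abs_of_pos (phiG_pos x), abs_of_pos (show (0:ℝ) < (x^2+1)^2 by positivity)]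
    rw [div_le_iff₀ (by positivity)]
    have : |x^4 + 2*x^2 - 1| ≤ (x^2+1)^2 := by
      rw [abs_le]; constructor <;> nlinarith
    nlinarith [phiG_pos x, abs_nonneg (x^4+2*x^2-1)]
  have htend : Tendsto (fun x : ℝ => -(x/(x^2+1) * phiG x)) atTop (𝓝 0) := by
    rw [← neg_zero]
    refine Tendsto.neg ?_
    apply squeeze_zero_norm ?_ phiG_tendsto_zero
    intro x
    rw [Real.norm_eq_abs, abs_mul, abs_of_pos (phiG_pos x)]
    have h1 : |x/(x^2+1)| ≤ 1 := by
      rw [abs_div, abs_of_pos (show (0:ℝ) < x^2+1 by positivity), div_le_one (by positivity)]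
      nlinarith [abs_nonneg x, sq_abs x]
    nlinarith [phiG_pos x, abs_nonneg (x/(x^2+1))]
  have key := integral_Ioi_of_hasDerivAt_of_tendsto' (a := t) (fun x _ => hderiv x)
    hρint.integrableOn htend
  have h2 : ∫ x in Ioi t, ρ x ≤ QG t := by
    refine setIntegral_mono_on hρint.integrableOn integrable_phiG.integrableOn
      measurableSet_Ioi fun x _ => hρle x
  rw [key] at h2
  calc t * phiG t / (t^2+1) = 0 - -(t/(t^2+1) * phiG t) := by ring
  _ ≤ QG t := h2

lemma QG_pos {t : ℝ} (ht : 0 < t) : 0 < QG t := by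
  have h := phiG_pos t
  exact lt_of_lt_of_le (by positivity) (QG_ge t)

/-- The noncentral chi-squared distribution with 1 degree of freedom and noncentrality
`M²/a`: the law of `(Z + M/√a)²` for `Z ∼ N(0,1)`. -/
noncomputable def ncChiSq (a : ℕ) (M : ℝ) : Measure ℝ :=
  Measure.map (fun z => (z + M / Real.sqrt a) ^ 2) (gaussianReal 0 1)

/-- The CDF of the noncentral χ²₁(M²/a) distribution. -/
noncomputable def ncCDF (a : ℕ) (M y : ℝ) : ℝ := ((ncChiSq a M) (Set.Iic y)).toReal



noncomputable def Gc (c y : ℝ) : ℝ := PhiG (Real.sqrt y - c) - PhiG (-Real.sqrt y - c)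

lemma PhiG_strictMono : StrictMono PhiG :=
  strictMono_of_deriv_pos (fun x => by rw [(PhiG_hasDeriv x).deriv]; exact phiG_pos x)

lemma ncCDF_eq {a : ℕ} (M y : ℝ) (hy : 0 ≤ y) : ncCDF a M y = Gc (M / Real.sqrt a) y := by
  set c := M / Real.sqrt a with hc
  have hmeas : Measurable fun z : ℝ => (z + c) ^ 2 :=
    (measurable_id.add_const c).pow_const 2
  have hpre : (fun z : ℝ => (z + c) ^ 2) ⁻¹' (Iic y) = Icc (-Real.sqrt y - c) (Real.sqrt y - c) := by
    ext z
    simp only [mem_preimage, mem_Iic, mem_Icc]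
    rw [← Real.sqrt_le_sqrt_iff (by positivity), Real.sqrt_sq_eq_abs, abs_le]
    constructor
    · rintro ⟨h1, h2⟩; constructor <;> linarith
    · rintro ⟨h1, h2⟩; constructor <;> linarith
  rw [ncCDF, ncChiSq, Measure.map_apply hmeas measurableSet_Iic, hpre,
    gaussianReal_apply_eq_integral 0 one_ne_zero _,
    ENNReal.toReal_ofReal (by
      exact setIntegral_nonneg measurableSet_Icc fun x _ => gaussianPDFReal_nonneg 0 1 x)]
  have hAB : -Real.sqrt y - c ≤ Real.sqrt y - c := by
    have := Real.sqrt_nonneg y; linarith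
  rw [← phiG_eq_gauss, Gc, PhiG, PhiG,
    intervalIntegral.integral_Iic_sub_Iic integrable_phiG.integrableOn
      integrable_phiG.integrableOn,
    intervalIntegral.integral_of_le hAB, integral_Icc_eq_integral_Ioc]

lemma Gc_strictMonoOn (c : ℝ) : StrictMonoOn (Gc c) (Ici 0) := by
  intro y hy y' hy' hlt
  have hs : Real.sqrt y < Real.sqrt y' := Real.sqrt_lt_sqrt hy hlt
  have h1 := PhiG_strictMono (show Real.sqrt y - c < Real.sqrt y' - c by linarith)
  have h2 := PhiG_strictMono (show -Real.sqrt y' - c < -Real.sqrt y - c by linarith)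
  unfold Gc; linarith

lemma one_sub_Gc (c y : ℝ) : 1 - Gc c y = QG (Real.sqrt y - c) + QG (Real.sqrt y + c) := by
  have h1 := PhiG_add_QG (Real.sqrt y - c)
  have h2 : PhiG (-Real.sqrt y - c) = QG (Real.sqrt y + c) := by
    rw [show -Real.sqrt y - c = -(Real.sqrt y + c) by ring, PhiG_neg]
  unfold Gc; linarith

lemma Gc_hasDeriv (c : ℝ) {y : ℝ} (hy : 0 < y) :
    HasDerivAt (Gc c) ((phiG (Real.sqrt y - c) + phiG (Real.sqrt y + c)) / (2 * Real.sqrt y)) y := by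
  have hs := Real.sqrt_pos.mpr hy
  have h1 : HasDerivAt (fun u => Real.sqrt u - c) (1 / (2 * Real.sqrt y)) y :=
    (Real.hasDerivAt_sqrt hy.ne').sub_const c
  have h2 : HasDerivAt (fun u => -Real.sqrt u - c) (-(1 / (2 * Real.sqrt y))) y :=
    ((Real.hasDerivAt_sqrt hy.ne').neg).sub_const c
  have H1 := (PhiG_hasDeriv (Real.sqrt y - c)).comp y h1
  have H2 := (PhiG_hasDeriv (-Real.sqrt y - c)).comp y h2
  have := H1.sub H2
  refine this.congr_deriv ?_
  rw [show -Real.sqrt y - c = -(Real.sqrt y + c) by ring, phiG_even]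
  field_simp
  ring


lemma phiG_anti {s t : ℝ} (h : s^2 ≤ t^2) : phiG t ≤ phiG s := by
  unfold phiG
  have hπ : (0:ℝ) < (Real.sqrt (2*Real.pi))⁻¹ := by have := Real.pi_pos; positivity
  have := Real.exp_le_exp.mpr (show -t^2/2 ≤ -s^2/2 by linarith)
  nlinarith

lemma QG_hasDeriv (t : ℝ) : HasDerivAt QG (-phiG t) t := by
  have h : QG = fun t => 1 - PhiG t := by
    funext u; have := PhiG_add_QG u; linarith
  rw [h]
  simpa using (PhiG_hasDeriv t).const_sub 1

lemma ratio_anti : AntitoneOn (fun t => QG t / phiG t) (Ici 0) := by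
  have hd : ∀ t : ℝ, HasDerivAt (fun t => QG t / phiG t)
      ((-phiG t * phiG t - QG t * (-t * phiG t)) / (phiG t)^2) t := fun t =>
    (QG_hasDeriv t).div (phiG_hasDeriv t) (phiG_pos t).ne'
  refine antitoneOn_of_deriv_nonpos (convex_Ici 0)
    (fun t _ => (hd t).continuousAt.continuousWithinAt)
    (fun t _ => (hd t).differentiableAt.differentiableWithinAt) fun t ht => ?_
  rw [interior_Ici] at ht
  rw [(hd t).deriv]
  have h1 : QG t ≤ phiG t / t := QG_le ht
  have h2 : t * QG t ≤ phiG t := by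
    rw [div_eq_mul_inv] at h1
    have := (mul_le_mul_of_nonneg_left h1 (le_of_lt ht))
    rwa [mul_comm (phiG t) t⁻¹, ← mul_assoc, mul_inv_cancel₀ ht.ne', one_mul] at this
  apply div_nonpos_of_nonpos_of_nonneg _ (sq_nonneg _)
  nlinarith [phiG_pos t]

noncomputable def Rf (c y : ℝ) : ℝ :=
  2 * Real.sqrt y * (QG (Real.sqrt y - c) + QG (Real.sqrt y + c)) /
    (phiG (Real.sqrt y - c) + phiG (Real.sqrt y + c))

lemma Rf_nonneg (c y : ℝ) : 0 ≤ Rf c y := by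
  unfold Rf
  have := QG_nonneg (Real.sqrt y - c); have := QG_nonneg (Real.sqrt y + c)
  have := phiG_pos (Real.sqrt y - c); have := phiG_pos (Real.sqrt y + c)
  have := Real.sqrt_nonneg y
  positivity

lemma Rf_upper {M c y : ℝ} (hc0 : 0 ≤ c) (hcM : c ≤ M) (hM : 0 ≤ M) (hy : M^2 < y) :
    Rf c y ≤ 2 * Real.sqrt y / (Real.sqrt y - M) := by
  set s := Real.sqrt y with hs
  have hMs : M < s := Real.lt_sqrt hM |>.mpr hy
  have ht1 : 0 < s - c := by linarith
  have ht2 : s - c ≤ s + c := by linarith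
  have hφ1 := phiG_pos (s - c); have hφ2 := phiG_pos (s + c)
  have hQ1 : QG (s - c) ≤ phiG (s - c) / (s - c) := QG_le ht1
  have hQ2 : QG (s + c) ≤ phiG (s + c) / (s - c) := by
    refine (QG_le (lt_of_lt_of_le ht1 ht2)).trans ?_
    exact div_le_div_of_nonneg_left hφ2.le ht1 ht2
  have hnum : QG (s - c) + QG (s + c) ≤ (phiG (s - c) + phiG (s + c)) / (s - c) := by
    rw [add_div]; exact add_le_add hQ1 hQ2
  have hs0 : 0 < s := by linarith
  calc Rf c y ≤ 2 * s * ((phiG (s - c) + phiG (s + c)) / (s - c)) /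
      (phiG (s - c) + phiG (s + c)) := by
        unfold Rf; rw [← hs]; gcongr
  _ = 2 * s / (s - c) := by field_simp
  _ ≤ 2 * s / (s - M) := by gcongr

lemma Rf_lower {M c y : ℝ} (hc0 : 0 ≤ c) (hcM : c ≤ M) (hM : 0 ≤ M) (hy : M^2 < y) :
    2 * y / ((Real.sqrt y + M)^2 + 1) ≤ Rf c y := by
  set s := Real.sqrt y with hs
  have hMs : M < s := Real.lt_sqrt hM |>.mpr hy
  have hs0 : 0 < s := lt_of_le_of_lt hM hMs
  have ht1 : 0 < s - c := by linarith
  have ht2 : s - c ≤ s + c := by linarith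
  have hφ1 := phiG_pos (s - c); have hφ2 := phiG_pos (s + c)
  have hrat' : QG (s + c) * phiG (s - c) ≤ QG (s - c) * phiG (s + c) := by
    have h := ratio_anti (mem_Ici.mpr ht1.le) (mem_Ici.mpr (ht1.le.trans ht2)) ht2
    rwa [div_le_div_iff₀ hφ2 hφ1] at h
  have hkey : QG (s + c) / phiG (s + c) ≤
      (QG (s - c) + QG (s + c)) / (phiG (s - c) + phiG (s + c)) := by
    rw [div_le_div_iff₀ hφ2 (by positivity)]
    nlinarith [hrat']
  have step1 : 2 * s * (QG (s + c) / phiG (s + c)) ≤ Rf c y := by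
    unfold Rf; rw [← hs, mul_div_assoc]
    exact mul_le_mul_of_nonneg_left hkey (by positivity)
  have hQg : (s + c) / ((s + c)^2 + 1) ≤ QG (s + c) / phiG (s + c) := by
    have h := QG_ge (s + c)
    rw [div_le_div_iff₀ (by positivity) hφ2]
    rw [div_le_iff₀ (by positivity)] at h
    nlinarith
  have step2 : s / ((s + M)^2 + 1) ≤ (s + c) / ((s + c)^2 + 1) := by
    rw [div_le_div_iff₀ (by positivity) (by positivity)]
    have e1 : (s+c)^2 ≤ (s+M)^2 := by nlinarith
    nlinarith [mul_le_mul_of_nonneg_left e1 (show (0:ℝ) ≤ s+c by linarith),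
      mul_nonneg hc0 (sq_nonneg (s+c))]
  have hyy : s * s = y := Real.mul_self_sqrt (by nlinarith)
  calc 2 * y / ((s + M)^2 + 1) = 2 * s * (s / ((s + M)^2 + 1)) := by
        rw [← hyy]; ring
  _ ≤ 2 * s * ((s + c) / ((s + c)^2 + 1)) := by
        apply mul_le_mul_of_nonneg_left step2 (by positivity)
  _ ≤ 2 * s * (QG (s + c) / phiG (s + c)) := by
        apply mul_le_mul_of_nonneg_left hQg (by positivity)
  _ ≤ Rf c y := step1

lemma Rf_bounded {M c y : ℝ} (hc0 : 0 ≤ c) (hcM : c ≤ M) (hM : 0 ≤ M) (hy0 : 0 < y) :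
    Rf c y ≤ max (4 * (M+1) / phiG (M+1)) (2 * (M+1)) := by
  set s := Real.sqrt y with hs
  have hs0 : 0 < s := Real.sqrt_pos.mpr hy0
  have hφ1 := phiG_pos (s - c); have hφ2 := phiG_pos (s + c)
  rcases le_or_gt y ((M+1)^2) with hcase | hcase
  · -- small y
    have hsle : s ≤ M + 1 := by
      rw [hs, show (M+1 : ℝ) = Real.sqrt ((M+1)^2) from (Real.sqrt_sq (by linarith)).symm]
      exact Real.sqrt_le_sqrt hcase
    have ht1sq : (s - c)^2 ≤ (M+1)^2 := by nlinarith
    have hφδ : phiG (M+1) ≤ phiG (s - c) := phiG_anti ht1sq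
    have hδ := phiG_pos (M+1)
    refine le_trans ?_ (le_max_left _ _)
    unfold Rf; rw [← hs]
    apply div_le_div₀ (by positivity) ?_ hδ (by linarith)
    have := QG_le_one (s - c); have := QG_le_one (s + c)
    have h1 := QG_nonneg (s - c); have h2 := QG_nonneg (s + c)
    nlinarith
  · -- large y
    have hMy : M^2 < y := by nlinarith
    refine le_trans (Rf_upper hc0 hcM hM hMy) (le_trans ?_ (le_max_right _ _))
    have hsge : M + 1 ≤ s := by
      rw [hs, show (M+1 : ℝ) = Real.sqrt ((M+1)^2) from (Real.sqrt_sq (by linarith)).symm]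
      exact Real.sqrt_le_sqrt hcase.le
    rw [div_le_iff₀ (by linarith)]
    nlinarith

lemma tendsto_sqrt_atTop : Tendsto Real.sqrt atTop atTop := by
  rw [tendsto_atTop_atTop]
  intro b
  refine ⟨(max b 0)^2, fun a ha => ?_⟩
  have h1 : max b 0 ≤ Real.sqrt a := by
    rw [show max b 0 = Real.sqrt ((max b 0)^2) from (Real.sqrt_sq (le_max_right b 0)).symm]
    exact Real.sqrt_le_sqrt ha
  exact le_trans (le_max_left b 0) h1

lemma tendsto_U (M : ℝ) :
    Tendsto (fun y : ℝ => 2 * Real.sqrt y / (Real.sqrt y - M)) atTop (𝓝 2) := by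
  have hbase : Tendsto (fun s : ℝ => 2 * s / (s - M)) atTop (𝓝 2) := by
    have h1 : Tendsto (fun s : ℝ => M / s) atTop (𝓝 0) :=
      Tendsto.div_atTop tendsto_const_nhds tendsto_id
    have h2 : Tendsto (fun s : ℝ => 2 / (1 - M / s)) atTop (𝓝 2) := by
      have := tendsto_const_nhds (x := (2:ℝ)) (f := atTop (α := ℝ))
      have h3 : Tendsto (fun s : ℝ => 1 - M / s) atTop (𝓝 1) := by
        simpa using tendsto_const_nhds.sub h1
      simpa [Pi.div_def] using this.div h3 one_ne_zero
    refine h2.congr' ?_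
    filter_upwards [eventually_gt_atTop (max M 0)] with s hs
    have hs0 : 0 < s := lt_of_le_of_lt (le_max_right M 0) hs
    have hsM : M < s := lt_of_le_of_lt (le_max_left M 0) hs
    field_simp
  exact hbase.comp _root_.tendsto_sqrt_atTop

lemma tendsto_L (M : ℝ) :
    Tendsto (fun y : ℝ => 2 * y / ((Real.sqrt y + M)^2 + 1)) atTop (𝓝 2) := by
  have hD : Tendsto (fun y : ℝ => ((Real.sqrt y + M)^2 + 1) / y) atTop (𝓝 1) := by
    have h1 : Tendsto (fun y : ℝ => 2 * M / Real.sqrt y) atTop (𝓝 0) :=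
      Tendsto.div_atTop tendsto_const_nhds _root_.tendsto_sqrt_atTop
    have h2 : Tendsto (fun y : ℝ => (M^2 + 1) / y) atTop (𝓝 0) :=
      Tendsto.div_atTop tendsto_const_nhds tendsto_id
    have hbase : Tendsto (fun y : ℝ => 1 + 2 * M / Real.sqrt y + (M^2 + 1) / y)
        atTop (𝓝 1) := by
      simpa using (tendsto_const_nhds.add h1).add h2
    refine hbase.congr' ?_
    filter_upwards [eventually_gt_atTop (0:ℝ)] with y hy
    set s := Real.sqrt y with hsdef
    have hs0 : 0 < s := Real.sqrt_pos.mpr hy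
    have hsq : s^2 = y := Real.sq_sqrt hy.le
    rw [← hsq]
    field_simp
    ring
  have h2 : Tendsto (fun y : ℝ => 2 / (((Real.sqrt y + M)^2 + 1) / y)) atTop (𝓝 2) := by
    simpa [Pi.div_def] using (tendsto_const_nhds (x := (2:ℝ))).div hD one_ne_zero
  refine h2.congr' ?_
  filter_upwards [eventually_gt_atTop (0:ℝ)] with y hy
  rw [div_div_eq_mul_div]


/-- The derivative `H̃'_{a,M}` of `H̃_{a,M}(v) = G_{a,M}⁻¹(1 - e^{-v})` is uniformly
bounded (over `a ≥ 1` and `v > 0`), and `H̃'_{a,M}(v) → 2` as `v → ∞` and `a → ∞`. -/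
theorem tildeH_deriv_bounded_and_tendsto_two (M : ℝ) (hM : 0 ≤ M)
    (H : ℕ → ℝ → ℝ)
    (hH : ∀ a : ℕ, 1 ≤ a → ∀ v ∈ Set.Ioi (0:ℝ),
      0 < H a v ∧ ncCDF a M (H a v) = 1 - Real.exp (-v)) :
    (∃ C : ℝ, ∀ a : ℕ, 1 ≤ a → ∀ v ∈ Set.Ioi (0:ℝ), |deriv (H a) v| ≤ C) ∧
    Tendsto (fun p : ℕ × ℝ => deriv (H p.1) p.2) (atTop ×ˢ atTop) (nhds 2) := by
  have hc : ∀ a : ℕ, 1 ≤ a → 0 ≤ M / Real.sqrt a ∧ M / Real.sqrt a ≤ M := by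
    intro a ha
    have h1 : (1:ℝ) ≤ Real.sqrt a := by
      rw [show (1:ℝ) = Real.sqrt 1 from Real.sqrt_one.symm]
      exact Real.sqrt_le_sqrt (by exact_mod_cast ha)
    have h0 : 0 ≤ M / Real.sqrt a := by positivity
    refine ⟨h0, ?_⟩
    calc M / Real.sqrt a ≤ M / 1 := by gcongr
    _ = M := div_one M
  have hkey : ∀ a, 1 ≤ a → ∀ v : ℝ, 0 < v →
      0 < H a v ∧ Gc (M / Real.sqrt a) (H a v) = 1 - Real.exp (-v) := by
    intro a ha v hv
    obtain ⟨h1, h2⟩ := hH a ha v hv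
    exact ⟨h1, by rw [← ncCDF_eq M _ h1.le]; exact h2⟩
  have hesc : ∀ a, 1 ≤ a → ∀ v : ℝ, 0 < v → ∀ y₀ : ℝ, 0 ≤ y₀ →
      Real.exp (-v) < QG (Real.sqrt y₀) → y₀ < H a v := by
    intro a ha v hv y₀ hy₀ hQ
    by_contra hcon
    push_neg at hcon
    obtain ⟨hpos, hG⟩ := hkey a ha v hv
    have hmono : Gc (M/Real.sqrt a) (H a v) ≤ Gc (M/Real.sqrt a) y₀ :=
      (Gc_strictMonoOn _).monotoneOn (mem_Ici.mpr hpos.le) (mem_Ici.mpr hy₀) hcon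
    have h1 := one_sub_Gc (M/Real.sqrt a) y₀
    have h2 : QG (Real.sqrt y₀) ≤ QG (Real.sqrt y₀ - M/Real.sqrt a) :=
      QG_antitone (by linarith [(hc a ha).1])
    have h3 := QG_nonneg (Real.sqrt y₀ + M/Real.sqrt a)
    rw [hG] at hmono
    linarith
  have hcontAt : ∀ a, 1 ≤ a → ∀ v₀ : ℝ, 0 < v₀ → ContinuousAt (H a) v₀ := by
    intro a ha v₀ hv₀
    obtain ⟨hb, hGb⟩ := hkey a ha v₀ hv₀
    set c := M / Real.sqrt a
    set b := H a v₀ with hbdef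
    rw [ContinuousAt, Metric.tendsto_nhds]
    intro ε hε
    set y₁ := max (b - ε) (b/2) with hy₁def
    have hy₁pos : 0 < y₁ := lt_of_lt_of_le (by linarith) (le_max_right _ _)
    have hy₁lt : y₁ < b := max_lt (by linarith) (by linarith)
    have hglt1 : Gc c y₁ < Gc c b :=
      Gc_strictMonoOn c (mem_Ici.mpr hy₁pos.le) (mem_Ici.mpr hb.le) hy₁lt
    have hglt2 : Gc c b < Gc c (b + ε) :=
      Gc_strictMonoOn c (mem_Ici.mpr hb.le) (mem_Ici.mpr (by linarith)) (by linarith)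
    have hw : Continuous (fun v : ℝ => 1 - Real.exp (-v)) := by fun_prop
    have hev : ∀ᶠ v in 𝓝 v₀, (1 - Real.exp (-v)) ∈ Ioo (Gc c y₁) (Gc c (b + ε)) := by
      have hmem : Ioo (Gc c y₁) (Gc c (b + ε)) ∈ 𝓝 (1 - Real.exp (-v₀)) := by
        rw [← hGb]
        exact Ioo_mem_nhds hglt1 hglt2
      exact (hw.tendsto v₀).eventually_mem hmem
    have hev0 : ∀ᶠ v in 𝓝 v₀, v ∈ Ioi (0:ℝ) := isOpen_Ioi.eventually_mem hv₀
    filter_upwards [hev, hev0] with v hvIoo hvpos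
    obtain ⟨hpos, hGv⟩ := hkey a ha v hvpos
    rw [Real.dist_eq, abs_lt]
    have h1 : y₁ < H a v := by
      by_contra hcon
      push_neg at hcon
      have hm : Gc c (H a v) ≤ Gc c y₁ :=
        (Gc_strictMonoOn c).monotoneOn (mem_Ici.mpr hpos.le) (mem_Ici.mpr hy₁pos.le) hcon
      rw [hGv] at hm
      exact absurd hvIoo.1 (not_lt.mpr hm)
    have h2 : H a v < b + ε := by
      by_contra hcon
      push_neg at hcon
      have hm : Gc c (b + ε) ≤ Gc c (H a v) :=
        (Gc_strictMonoOn c).monotoneOn (mem_Ici.mpr (by linarith)) (mem_Ici.mpr hpos.le) hcon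
      rw [hGv] at hm
      exact absurd hvIoo.2 (not_lt.mpr hm)
    have h3 : b - ε ≤ y₁ := le_max_left _ _
    constructor <;> linarith
  have hderiv : ∀ a, 1 ≤ a → ∀ v₀ : ℝ, 0 < v₀ →
      deriv (H a) v₀ = Rf (M / Real.sqrt a) (H a v₀) := by
    intro a ha v₀ hv₀
    obtain ⟨hb, hGb⟩ := hkey a ha v₀ hv₀
    set c := M / Real.sqrt a
    set b := H a v₀ with hbdef
    have hs0 : 0 < Real.sqrt b := Real.sqrt_pos.mpr hb
    set gd := (phiG (Real.sqrt b - c) + phiG (Real.sqrt b + c)) / (2 * Real.sqrt b) with hgddef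
    have hφ1 := phiG_pos (Real.sqrt b - c); have hφ2 := phiG_pos (Real.sqrt b + c)
    have hgd0 : 0 < gd := by rw [hgddef]; positivity
    have hGd : HasDerivAt (Gc c) gd b := Gc_hasDeriv c hb
    have hval : 1 - Gc c b = Real.exp (-v₀) := by rw [hGb]; ring
    have h1 : HasDerivAt (fun y => 1 - Gc c y) (-gd) b := by
      simpa using hGd.const_sub 1
    have h2 : HasDerivAt (fun y => -Real.log (1 - Gc c y)) (gd / Real.exp (-v₀)) b := by
      have hlog := (h1.log (by rw [hval]; exact (Real.exp_pos _).ne')).neg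
      refine hlog.congr_deriv ?_
      rw [hval]
      field_simp
    have hfg : ∀ᶠ x in 𝓝 v₀, -Real.log (1 - Gc c (H a x)) = x := by
      filter_upwards [isOpen_Ioi.eventually_mem (show v₀ ∈ Ioi (0:ℝ) from hv₀)] with x hx
      obtain ⟨_, hGx⟩ := hkey a ha x hx
      rw [hGx, show (1 : ℝ) - (1 - Real.exp (-x)) = Real.exp (-x) by ring, Real.log_exp]
      ring
    have hD : HasDerivAt (H a) (gd / Real.exp (-v₀))⁻¹ v₀ :=
      HasDerivAt.of_local_left_inverse (hcontAt a ha v₀ hv₀) h2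
        (by positivity) hfg
    rw [hD.deriv]
    have he : Real.exp (-v₀) = QG (Real.sqrt b - c) + QG (Real.sqrt b + c) := by
      rw [← hval, one_sub_Gc]
    rw [inv_div, hgddef, Rf, he]
    rw [div_div_eq_mul_div]
    ring
  constructor
  · refine ⟨max (4 * (M+1) / phiG (M+1)) (2 * (M+1)), fun a ha v hv => ?_⟩
    rw [hderiv a ha v hv, abs_of_nonneg (Rf_nonneg _ _)]
    exact Rf_bounded (hc a ha).1 (hc a ha).2 hM (hkey a ha v hv).1
  · rw [Metric.tendsto_nhds]
    intro ε hε
    have e1 : ∀ᶠ y : ℝ in atTop, dist (2 * Real.sqrt y / (Real.sqrt y - M)) 2 < ε :=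
      (Metric.tendsto_nhds.mp (tendsto_U M)) ε hε
    have e2 : ∀ᶠ y : ℝ in atTop, dist (2 * y / ((Real.sqrt y + M)^2 + 1)) 2 < ε :=
      (Metric.tendsto_nhds.mp (tendsto_L M)) ε hε
    have e3 : ∀ᶠ y : ℝ in atTop, (M+1)^2 < y := eventually_gt_atTop _
    obtain ⟨y₀, hy₀⟩ := eventually_atTop.mp (e1.and (e2.and e3))
    have hy₀big : (M+1)^2 < y₀ := (hy₀ y₀ le_rfl).2.2
    have hy₀pos : 0 < y₀ := lt_of_le_of_lt (by positivity) hy₀big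
    have hQpos : 0 < QG (Real.sqrt y₀) := QG_pos (Real.sqrt_pos.mpr hy₀pos)
    have hevv : ∀ᶠ v : ℝ in atTop, Real.exp (-v) < QG (Real.sqrt y₀) ∧ 0 < v := by
      have t1 := Real.tendsto_exp_neg_atTop_nhds_zero.eventually_lt_const hQpos
      exact t1.and (eventually_gt_atTop 0)
    have heva : ∀ᶠ a : ℕ in atTop, 1 ≤ a := eventually_ge_atTop 1
    filter_upwards [Filter.Eventually.prod_mk heva hevv] with p hp
    obtain ⟨ha, hexp, hvpos⟩ := hp
    have hy := hesc p.1 ha p.2 hvpos y₀ hy₀pos.le hexp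
    set y := H p.1 p.2 with hydef
    obtain ⟨hU', hL', hMy⟩ := hy₀ y hy.le
    rw [hderiv p.1 ha p.2 hvpos, Real.dist_eq, abs_lt]
    have hMsq : M^2 < y := by nlinarith
    have h1 := Rf_upper (hc p.1 ha).1 (hc p.1 ha).2 hM hMsq
    have h2 := Rf_lower (hc p.1 ha).1 (hc p.1 ha).2 hM hMsq
    rw [Real.dist_eq, abs_lt] at hU' hL'
    constructor <;> linarith
end
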